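/- Let Γ be a group with identity e, and let g_1,…,g_k ∈ Γ and x = (x_1,…,x_l) be a word arising from a surjective non-decreasing map σ : D_σ → {1,…,l} on a subset D_σ ⊆ {1,…,k} via x_j = Π_{σ(i)=j} g_i. Set P_k := (b_{g_1} + δ_{g_1,e}·1) ⊗ ⋯ ⊗ (b_{g_k} + δ_{g_k,e}·1) in (ℤ⟨Γ⟩, +, ⊗). Then the coefficient of b_x in P_k equals the number of non-crossing partitions p of the set with upper row (x_1,…,x_l) and lower row (g_1,…,g_k) such that in each block the product of the upper labels equals the product of the lower labels, each block contains at most one upper point, and each block contains at least one lower point. -/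

import Mathlib

/-- Involution on words: reverse and invert letters. -/
def wordInv {Γ : Type*} [Group Γ] (w : List Γ) : List Γ := (w.map (·⁻¹)).reverse

/-- Fusion of two words: multiply the last letter of `u` with the first letter of `v`. -/
def fuse {Γ : Type*} [Group Γ] (u v : List Γ) : List Γ :=
  match u.getLast?, v with
  | some a, b :: t => u.dropLast ++ (a * b) :: t
  | _, _ => u ++ v

open scoped Classical in
/-- The fusion product on basis elements:
`b_x ⊗ b_y = Σ_{x=u·t, y=t̄·v} b_{u·v} + Σ_{x=u·t, y=t̄·v, u≠∅, v≠∅} b_{u∗v}`. -/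
noncomputable def basisMul {Γ : Type*} [Group Γ] (x y : List Γ) : List Γ →₀ ℤ :=
  ∑ k ∈ Finset.range (min x.length y.length + 1),
    if wordInv (x.drop (x.length - k)) = y.take k then
      Finsupp.single (x.take (x.length - k) ++ y.drop k) 1 +
        (if k < x.length ∧ k < y.length then
          Finsupp.single (fuse (x.take (x.length - k)) (y.drop k)) 1 else 0)
    else 0

/-- The fusion product `⊗` on the free `ℤ`-module `ℤ⟨Γ⟩` on words over `Γ`,
extended bilinearly from the fusion rules. -/
noncomputable def fmul {Γ : Type*} [Group Γ] (α β : List Γ →₀ ℤ) : List Γ →₀ ℤ :=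
  α.sum fun x a => β.sum fun y b => (a * b) • basisMul x y


open scoped Classical

/-- Linear position of the points of a partition diagram with `l` upper points
(read left to right) and `k` lower points: upper points first, lower points in
reversed order, giving the standard cyclic order on the boundary of the disc. -/
def ncPos (l k : ℕ) : Fin l ⊕ Fin k → ℕ :=
  Sum.elim (fun i => (i : ℕ)) (fun j => l + (k - 1 - (j : ℕ)))

/-- A partition of `l` upper and `k` lower points (as a setoid) is non-crossing. -/
def NonCrossing (l k : ℕ) (P : Setoid (Fin l ⊕ Fin k)) : Prop :=
  ¬ ∃ a b c d : Fin l ⊕ Fin k,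
      ncPos l k a < ncPos l k b ∧ ncPos l k b < ncPos l k c ∧ ncPos l k c < ncPos l k d ∧
      P.r a c ∧ P.r b d ∧ ¬ P.r a b

/-- Ordered product of the labels indexed by a finite set of positions,
taken in increasing (left-to-right) order. -/
noncomputable def orderedProd {Γ : Type*} [Group Γ] {m : ℕ} (f : Fin m → Γ)
    (s : Finset (Fin m)) : Γ :=
  ((s.sort (· ≤ ·)).map f).prod

/-- `NCprime x g` is the set `NC'_Γ((x_1,…,x_l); (g_1,…,g_k))` of non-crossing partitions
of `l` upper points labelled by `x` and `k` lower points labelled by `g` such that in each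
block the product of the upper labels equals the product of the lower labels, each block
contains at most one upper point, and each block contains at least one lower point. -/
noncomputable def NCprime {Γ : Type*} [Group Γ] {l k : ℕ} (x : Fin l → Γ) (g : Fin k → Γ) :
    Set (Setoid (Fin l ⊕ Fin k)) :=
  {P | NonCrossing l k P ∧ ∀ p : Fin l ⊕ Fin k,
    orderedProd x (Finset.univ.filter fun i : Fin l => P.r (Sum.inl i) p) =
      orderedProd g (Finset.univ.filter fun j : Fin k => P.r (Sum.inr j) p) ∧
    (Finset.univ.filter fun i : Fin l => P.r (Sum.inl i) p).card ≤ 1 ∧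
    (Finset.univ.filter fun j : Fin k => P.r (Sum.inr j) p).Nonempty}

/-- `P_k = (b_{g_1} + δ_{g_1,e}1) ⊗ ⋯ ⊗ (b_{g_k} + δ_{g_k,e}1)` in `(ℤ⟨Γ⟩, +, ⊗)`. -/
noncomputable def Pk {Γ : Type*} [Group Γ] {k : ℕ} (g : Fin k → Γ) : List Γ →₀ ℤ :=
  (List.ofFn fun i : Fin k =>
      Finsupp.single [g i] (1 : ℤ) + (if g i = 1 then Finsupp.single [] 1 else 0)).foldl
    fmul (Finsupp.single ([] : List Γ) 1)

set_option linter.unusedSectionVars false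
section Algebra
variable {Γ : Type*} [Group Γ]

lemma concat_eq_concat_iff {α : Type*} {r v : List α} {b c : α} :
    r ++ [b] = v ++ [c] ↔ r = v ∧ b = c := by
  constructor
  · intro h
    have h1 : r = v := by
      have := congrArg List.dropLast h
      simpa [List.dropLast_concat] using this
    have h2 : (some b : Option α) = some c := by
      have := congrArg List.getLast? h
      simpa [List.getLast?_concat] using this
    exact ⟨h1, Option.some_injective _ h2⟩
  · rintro ⟨rfl, rfl⟩; rfl

lemma basisMul_nil_left (y : List Γ) : basisMul ([] : List Γ) y = Finsupp.single y 1 := by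
  simp [basisMul, wordInv]

lemma basisMul_nil_right (x : List Γ) : basisMul x ([] : List Γ) = Finsupp.single x 1 := by
  simp [basisMul, wordInv]

lemma basisMul_concat_single (r : List Γ) (b h : Γ) :
    basisMul (r ++ [b]) [h] =
      Finsupp.single (r ++ [b, h]) 1 + Finsupp.single (r ++ [b * h]) 1 +
        (if b = h⁻¹ then Finsupp.single r 1 else 0) := by
  have hmin : min (r ++ [b]).length [h].length + 1 = 2 := by simp
  rw [basisMul, hmin]
  rw [Finset.sum_range_succ, Finset.sum_range_succ, Finset.sum_range_zero]
  have h0 : (r ++ [b]).length - 0 = r.length + 1 := by simp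
  have h1 : (r ++ [b]).length - 1 = r.length := by simp
  have hdrop0 : (r ++ [b]).drop (r.length + 1) = [] := by
    apply List.drop_eq_nil_of_le; simp
  have htake0 : (r ++ [b]).take (r.length + 1) = r ++ [b] := by
    apply List.take_of_length_le; simp
  have hdrop1 : (r ++ [b]).drop r.length = [b] := List.drop_left
  have htake1 : (r ++ [b]).take r.length = r := List.take_left
  rw [h0, h1, hdrop0, htake0, hdrop1, htake1]
  have hc0 : wordInv ([] : List Γ) = [h].take 0 := by simp [wordInv]
  rw [if_pos hc0, List.drop_zero]
  have hfuse : fuse (r ++ [b]) [h] = r ++ [b * h] := by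
    simp only [fuse, List.getLast?_concat, List.dropLast_concat]
  have hc1 : (wordInv [b] = [h].take 1) ↔ b = h⁻¹ := by
    constructor
    · intro hh
      have hb : b⁻¹ = h := by simpa [wordInv] using hh
      rw [← hb, inv_inv]
    · intro hh; simp [wordInv, hh]
  have hcond2 : (0 < (r ++ [b]).length ∧ 0 < [h].length) := by simp
  rw [if_pos hcond2, hfuse]
  have hnot : ¬ (1 < (r ++ [b]).length ∧ 1 < [h].length) := by simp
  by_cases hb : b = h⁻¹
  · rw [if_pos (hc1.mpr hb), if_pos hb, if_neg hnot]
    have he : (r ++ [b]) ++ [h] = r ++ [b, h] := by simp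
    have he2 : r ++ [h].drop 1 = r := by simp
    rw [zero_add, he, he2, add_zero]
  · rw [if_neg (fun hh => hb (hc1.mp hh)), if_neg hb]
    have he : (r ++ [b]) ++ [h] = r ++ [b, h] := by simp
    rw [zero_add, he, add_zero]

lemma basisMul_single_apply (x w : List Γ) (h : Γ) :
    (basisMul x [h]) w =
      (if x ++ [h] = w then 1 else 0) +
      (if ∃ v c, w = v ++ [c] ∧ x = v ++ [c * h⁻¹] then 1 else 0) +
      (if x = w ++ [h⁻¹] then 1 else 0) := by
  rcases List.eq_nil_or_concat x with hx | ⟨r, b, hx⟩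
  · subst hx
    rw [basisMul_nil_left]
    have h2 : ¬ ∃ v c, w = v ++ [c] ∧ ([] : List Γ) = v ++ [c * h⁻¹] := by
      rintro ⟨v, c, -, hv⟩; simpa using hv.symm
    have h3 : ([] : List Γ) ≠ w ++ [h⁻¹] := by
      intro hv; simpa using hv.symm
    rw [if_neg h2, if_neg h3]
    simp [Finsupp.single_apply]
  · rw [List.concat_eq_append] at hx
    subst hx
    rw [basisMul_concat_single]
    have e1 : ((r ++ [b, h] : List Γ) = w) ↔ ((r ++ [b]) ++ [h] = w) := by
      rw [List.append_assoc]; rfl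
    have e2 : (r ++ [b * h] = w) ↔ (∃ v c, w = v ++ [c] ∧ r ++ [b] = v ++ [c * h⁻¹]) := by
      constructor
      · intro hw
        refine ⟨r, b * h, hw.symm, ?_⟩
        rw [mul_inv_cancel_right]
      · rintro ⟨v, c, hw, hv⟩
        obtain ⟨rfl, hb⟩ := concat_eq_concat_iff.mp hv
        rw [hw]
        have hbc : b * h = c := by rw [hb]; group
        rw [hbc]
    have e3 : (r ++ [b] = w ++ [h⁻¹]) ↔ (b = h⁻¹ ∧ r = w) := by
      rw [concat_eq_concat_iff]; tauto
    have t1 : (Finsupp.single (r ++ [b, h]) (1 : ℤ)) w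
        = if (r ++ [b]) ++ [h] = w then 1 else 0 := by
      rw [Finsupp.single_apply]; exact if_congr e1 rfl rfl
    have t2 : (Finsupp.single (r ++ [b * h]) (1 : ℤ)) w
        = if ∃ v c, w = v ++ [c] ∧ r ++ [b] = v ++ [c * h⁻¹] then 1 else 0 := by
      rw [Finsupp.single_apply]; exact if_congr e2 rfl rfl
    have t3 : (if b = h⁻¹ then Finsupp.single r (1 : ℤ) else 0) w
        = if r ++ [b] = w ++ [h⁻¹] then 1 else 0 := by
      by_cases hb : b = h⁻¹
      · rw [if_pos hb, Finsupp.single_apply]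
        by_cases hr : r = w
        · rw [if_pos hr, if_pos (e3.mpr ⟨hb, hr⟩)]
        · rw [if_neg hr, if_neg (fun hh => hr (e3.mp hh).2)]
      · rw [if_neg hb, if_neg (fun hh => hb (e3.mp hh).1)]
        rfl
    rw [Finsupp.add_apply, Finsupp.add_apply, t1, t2, t3]

lemma sum_delta (α : List Γ →₀ ℤ) (t : List Γ) :
    (α.sum fun y a => if y = t then a else 0) = α t := by
  rw [Finsupp.sum]
  rw [Finset.sum_ite_eq' α.support t (fun y => α y)]
  by_cases ht : t ∈ α.support
  · rw [if_pos ht]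
  · rw [if_neg ht, (Finsupp.notMem_support_iff.mp ht)]

private lemma split4 (α : List Γ →₀ ℤ) (t1 t2 t3 t4 : List Γ → ℤ → ℤ) :
    (α.sum fun x a => t1 x a + t2 x a + t3 x a + t4 x a)
      = α.sum t1 + α.sum t2 + α.sum t3 + α.sum t4 := by
  simp only [Finsupp.sum, Finset.sum_add_distrib]

lemma fmul_c_apply' (α : List Γ →₀ ℤ) (h : Γ) (w : List Γ) :
    (fmul α (Finsupp.single [h] 1 + if h = 1 then Finsupp.single [] 1 else 0)) w =
      (α.sum fun x a => if x ++ [h] = w then a else 0) +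
      (α.sum fun x a => if ∃ v c, w = v ++ [c] ∧ x = v ++ [c * h⁻¹] then a else 0) +
      α (w ++ [h⁻¹]) +
      (if h = 1 then α w else 0) := by
  rw [fmul]
  have hin : ∀ (x : List Γ) (a : ℤ),
      ((Finsupp.single [h] (1:ℤ) + if h = 1 then Finsupp.single [] 1 else 0).sum
        fun y b => (a * b) • basisMul x y)
      = a • basisMul x [h] + (if h = 1 then a • Finsupp.single x 1 else 0) := by
    intro x a
    by_cases hh : h = 1
    · rw [if_pos hh, if_pos hh]
      rw [Finsupp.sum_add_index' (fun y => by simp) (fun y b1 b2 => by rw [mul_add, add_smul])]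
      rw [Finsupp.sum_single_index (by simp), Finsupp.sum_single_index (by simp)]
      rw [mul_one, basisMul_nil_right]
    · rw [if_neg hh, if_neg hh, add_zero, add_zero]
      rw [Finsupp.sum_single_index (by simp), mul_one]
  rw [Finsupp.sum_apply]
  rw [Finsupp.sum_congr (g2 := fun x a =>
      (if x ++ [h] = w then a else 0) +
      (if ∃ v c, w = v ++ [c] ∧ x = v ++ [c * h⁻¹] then a else 0) +
      (if x = w ++ [h⁻¹] then a else 0) +
      (if h = 1 then (if x = w then a else 0) else 0))
    (fun x _ => by
      rw [hin x (α x), Finsupp.add_apply, Finsupp.smul_apply, basisMul_single_apply,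
        smul_eq_mul]
      congr 1
      · rw [mul_add, mul_add]
        simp only [mul_ite, mul_one, mul_zero]
      · by_cases hh : h = 1
        · rw [if_pos hh, if_pos hh, Finsupp.smul_apply, Finsupp.single_apply, smul_eq_mul]
          simp only [mul_ite, mul_one, mul_zero]
        · rw [if_neg hh, if_neg hh]
          rfl)]
  rw [split4]
  congr 1
  · congr 1
    exact sum_delta α (w ++ [h⁻¹])
  · by_cases hh : h = 1
    · simp only [if_pos hh]
      exact sum_delta α w
    · simp only [if_neg hh]
      rw [Finsupp.sum]
      exact Finset.sum_eq_zero (fun x _ => rfl)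

lemma fmul_c_apply_nil (α : List Γ →₀ ℤ) (h : Γ) :
    (fmul α (Finsupp.single [h] 1 + if h = 1 then Finsupp.single [] 1 else 0)) [] =
      α [h⁻¹] + (if h = 1 then α [] else 0) := by
  rw [fmul_c_apply']
  have h1 : (α.sum fun x a => if x ++ [h] = ([] : List Γ) then a else 0) = 0 := by
    rw [Finsupp.sum]
    exact Finset.sum_eq_zero (fun x _ => by rw [if_neg (by simp)])
  have h2 : (α.sum fun x a =>
      if ∃ v c, ([] : List Γ) = v ++ [c] ∧ x = v ++ [c * h⁻¹] then a else 0) = 0 := by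
    rw [Finsupp.sum]
    refine Finset.sum_eq_zero (fun x _ => ?_)
    rw [if_neg]
    rintro ⟨v, c, hv, -⟩
    simpa using hv.symm
  rw [h1, h2, zero_add, zero_add]
  rfl

lemma fmul_c_apply_concat (α : List Γ →₀ ℤ) (h : Γ) (v : List Γ) (c : Γ) :
    (fmul α (Finsupp.single [h] 1 + if h = 1 then Finsupp.single [] 1 else 0)) (v ++ [c]) =
      (if c = h then α v else 0) + α (v ++ [c * h⁻¹]) + α ((v ++ [c]) ++ [h⁻¹]) +
      (if h = 1 then α (v ++ [c]) else 0) := by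
  rw [fmul_c_apply']
  have h1 : (α.sum fun x a => if x ++ [h] = v ++ [c] then a else 0)
      = (if c = h then α v else 0) := by
    by_cases hch : c = h
    · rw [if_pos hch, ← sum_delta α v]
      refine Finsupp.sum_congr (fun x _ => ?_)
      refine if_congr ?_ rfl rfl
      rw [concat_eq_concat_iff]
      constructor
      · exact fun hh => hh.1
      · exact fun hh => ⟨hh, hch.symm⟩
    · rw [if_neg hch, Finsupp.sum]
      refine Finset.sum_eq_zero (fun x _ => ?_)
      rw [if_neg (fun hh => hch ((concat_eq_concat_iff.mp hh).2.symm))]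
  have h2 : (α.sum fun x a =>
      if ∃ v' c', v ++ [c] = v' ++ [c'] ∧ x = v' ++ [c' * h⁻¹] then a else 0)
      = α (v ++ [c * h⁻¹]) := by
    rw [← sum_delta α (v ++ [c * h⁻¹])]
    refine Finsupp.sum_congr (fun x _ => ?_)
    refine if_congr ?_ rfl rfl
    constructor
    · rintro ⟨v', c', hvc, hx⟩
      obtain ⟨rfl, rfl⟩ := concat_eq_concat_iff.mp hvc
      exact hx
    · exact fun hx => ⟨v, c, rfl, hx⟩
  rw [h1, h2]

lemma Pk_zero (g : Fin 0 → Γ) : Pk g = Finsupp.single [] 1 := by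
  simp [Pk]

lemma Pk_succ (k : ℕ) (g : Fin (k + 1) → Γ) :
    Pk g = fmul (Pk fun i : Fin k => g i.castSucc)
      (Finsupp.single [g (Fin.last k)] 1 +
        if g (Fin.last k) = 1 then Finsupp.single [] 1 else 0) := by
  rw [Pk, List.ofFn_succ', List.concat_eq_append, List.foldl_concat]
  rfl

lemma ofFn_snoc' {α : Type*} {n : ℕ} (f : Fin n → α) (a : α) :
    List.ofFn (Fin.snoc f a : Fin (n+1) → α) = List.ofFn f ++ [a] := by
  rw [List.ofFn_succ', List.concat_eq_append, Fin.snoc_last]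
  simp only [Fin.snoc_castSucc]

end Algebra
set_option linter.unusedSectionVars false
set_option maxHeartbeats 1000000

section Infra
variable {Γ : Type*} [Group Γ]

instance setoidFinite {β : Type*} [Finite β] : Finite (Setoid β) :=
  Finite.of_injective (fun P => P.r) (fun P Q h => by cases P; cases Q; congr)

lemma toList_perm_map {α β : Type*} [DecidableEq β] (f : α ↪ β) (s : Finset α) :
    (s.map f).toList.Perm (s.toList.map f) := by
  apply Multiset.coe_eq_coe.mp
  simp only [Finset.toList, Multiset.coe_toList, Finset.map_val]
  rw [← Multiset.map_coe, Multiset.coe_toList]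

lemma sort_map_castSucc {m : ℕ} (s : Finset (Fin m)) :
    (s.map Fin.castSuccOrderEmb.toEmbedding).sort (· ≤ ·)
      = (s.sort (· ≤ ·)).map Fin.castSucc := by
  have h1 := Finset.sort_perm_toList (r := (· ≤ ·)) (s := s.map Fin.castSuccOrderEmb.toEmbedding)
  have h2 := (Finset.sort_perm_toList (r := (· ≤ ·)) (s := s)).map Fin.castSucc
  have hperm := h1.trans ((toList_perm_map _ s).trans h2.symm)
  have hs2 : List.Pairwise (· ≤ ·) ((s.sort (· ≤ ·)).map Fin.castSucc) :=
    List.Pairwise.map _ (fun a b hab => Fin.castSucc_le_castSucc_iff.mpr hab)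
      (Finset.pairwise_sort (r := (· ≤ ·)) (s := s))
  exact List.Perm.eq_of_pairwise' (Finset.pairwise_sort (r := (· ≤ ·)) (s := _)) hs2 hperm

lemma sort_insert_max {m : ℕ} (t : Finset (Fin m)) (b : Fin m) (hb : ∀ y ∈ t, y < b) :
    (insert b t).sort (· ≤ ·) = t.sort (· ≤ ·) ++ [b] := by
  have hbt : b ∉ t := fun h => lt_irrefl b (hb b h)
  have h1 := Finset.sort_perm_toList (r := (· ≤ ·)) (s := insert b t)
  have h2 := Finset.sort_perm_toList (r := (· ≤ ·)) (s := t)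
  have hperm := h1.trans ((Finset.toList_insert hbt).trans
    ((h2.symm.cons b).trans (List.perm_append_singleton b _).symm))
  have hs2 : List.Pairwise (· ≤ ·) (t.sort (· ≤ ·) ++ [b]) := by
    rw [List.pairwise_append]
    refine ⟨Finset.pairwise_sort (r := (· ≤ ·)) (s := t), List.pairwise_singleton _ _, ?_⟩
    intro a ha c hc
    rw [List.mem_singleton] at hc
    subst hc
    exact (hb a ((Finset.mem_sort _).mp ha)).le
  exact List.Perm.eq_of_pairwise' (Finset.pairwise_sort (r := (· ≤ ·)) (s := _)) hs2 hperm

lemma orderedProd_empty {m : ℕ} (f : Fin m → Γ) : orderedProd f ∅ = 1 := by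
  simp [orderedProd]

lemma orderedProd_singleton {m : ℕ} (f : Fin m → Γ) (i : Fin m) :
    orderedProd f {i} = f i := by
  simp [orderedProd]

lemma orderedProd_map_castSucc {m : ℕ} (f : Fin (m + 1) → Γ) (s : Finset (Fin m)) :
    orderedProd f (s.map Fin.castSuccOrderEmb.toEmbedding)
      = orderedProd (fun i => f i.castSucc) s := by
  rw [orderedProd, orderedProd, sort_map_castSucc, List.map_map]
  rfl

lemma castSucc_mem_map_iff {m : ℕ} (s : Finset (Fin m)) (j : Fin m) :
    j.castSucc ∈ s.map Fin.castSuccOrderEmb.toEmbedding ↔ j ∈ s := by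
  simp only [Finset.mem_map]
  constructor
  · rintro ⟨j', hj', hh⟩
    have : j' = j := Fin.castSucc_injective _ hh
    rwa [← this]
  · exact fun h => ⟨j, h, rfl⟩

lemma last_not_mem_map {m : ℕ} (s : Finset (Fin m)) :
    Fin.last m ∉ s.map Fin.castSuccOrderEmb.toEmbedding := by
  simp only [Finset.mem_map]
  rintro ⟨j', -, hh⟩
  exact absurd hh (Fin.castSucc_lt_last j').ne

lemma orderedProd_insert_last {m : ℕ} (f : Fin (m + 1) → Γ) (s : Finset (Fin m)) :
    orderedProd f (insert (Fin.last m) (s.map Fin.castSuccOrderEmb.toEmbedding))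
      = orderedProd (fun i => f i.castSucc) s * f (Fin.last m) := by
  rw [orderedProd, sort_insert_max]
  · rw [List.map_append, List.prod_append, ← orderedProd, orderedProd_map_castSucc]
    simp
  · intro y hy
    rw [Finset.mem_map] at hy
    obtain ⟨j, -, rfl⟩ := hy
    exact Fin.castSucc_lt_last j

lemma orderedProd_congr {m : ℕ} (f f' : Fin m → Γ) (s : Finset (Fin m))
    (h : ∀ i ∈ s, f i = f' i) : orderedProd f s = orderedProd f' s := by
  rw [orderedProd, orderedProd]
  congr 1
  exact List.map_congr_left (fun a ha => h a ((Finset.mem_sort _).mp ha))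

lemma ncPos_injective (l k : ℕ) : Function.Injective (ncPos l k) := by
  rintro (i | j) (i' | j') h
  · simp only [ncPos, Sum.elim_inl] at h
    exact congrArg Sum.inl (Fin.ext h)
  · have := i.isLt
    simp only [ncPos, Sum.elim_inl, Sum.elim_inr] at h
    omega
  · have := i'.isLt
    simp only [ncPos, Sum.elim_inl, Sum.elim_inr] at h
    omega
  · have h1 := j.isLt
    have h2 := j'.isLt
    simp only [ncPos, Sum.elim_inr] at h
    exact congrArg Sum.inr (Fin.ext (by omega))

lemma nonCrossing_comap {l k l' k' : ℕ} (ι : Fin l' ⊕ Fin k' → Fin l ⊕ Fin k)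
    (hmono : ∀ a b, ncPos l' k' a < ncPos l' k' b → ncPos l k (ι a) < ncPos l k (ι b))
    {P : Setoid (Fin l ⊕ Fin k)} (h : NonCrossing l k P) :
    NonCrossing l' k' (Setoid.comap ι P) := by
  rintro ⟨a, b, c, d, h1, h2, h3, hac, hbd, hab⟩
  exact h ⟨ι a, ι b, ι c, ι d, hmono _ _ h1, hmono _ _ h2, hmono _ _ h3, hac, hbd, hab⟩

lemma card_split {β : Type*} [Finite β] (s : Set β) (p : β → Prop) :
    Nat.card {a : β // a ∈ s} =
      Nat.card {a : β // a ∈ s ∧ p a} + Nat.card {a : β // a ∈ s ∧ ¬ p a} := by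
  rw [← Nat.card_sum]
  apply Nat.card_congr
  exact (Equiv.sumCompl (fun b : {a : β // a ∈ s} => p b.val)).symm.trans
    (Equiv.sumCongr (Equiv.subtypeSubtypeEquivSubtypeInter (fun a => a ∈ s) p)
      (Equiv.subtypeSubtypeEquivSubtypeInter (fun a => a ∈ s) (fun a => ¬ p a)))

lemma card_eq_zero_of_none {β : Type*} (q : β → Prop) (h : ∀ a, ¬ q a) :
    Nat.card {a : β // q a} = 0 := by
  haveI : IsEmpty {a : β // q a} := ⟨fun a => h a.val a.property⟩
  exact Nat.card_of_isEmpty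

end Infra
section Shared
variable {Γ : Type*} [Group Γ]

/-- the distinguished last lower point -/
def qp (l k : ℕ) : Fin l ⊕ Fin (k + 1) := Sum.inr (Fin.last k)

/-- embedding of the diagram without the last lower point -/
def ιk (l k : ℕ) : Fin l ⊕ Fin k → Fin l ⊕ Fin (k + 1) := Sum.map id Fin.castSucc

def hasUp {l k : ℕ} (P : Setoid (Fin l ⊕ Fin (k + 1))) : Prop :=
  ∃ i : Fin l, P.r (Sum.inl i) (qp l k)

def moreLow {l k : ℕ} (P : Setoid (Fin l ⊕ Fin (k + 1))) : Prop :=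
  ∃ j : Fin k, P.r (Sum.inr j.castSucc) (qp l k)

noncomputable def upSet {m n : ℕ} (P : Setoid (Fin m ⊕ Fin n)) (p : Fin m ⊕ Fin n) :
    Finset (Fin m) := Finset.univ.filter fun i => P.r (Sum.inl i) p

noncomputable def lowSet {m n : ℕ} (P : Setoid (Fin m ⊕ Fin n)) (p : Fin m ⊕ Fin n) :
    Finset (Fin n) := Finset.univ.filter fun j => P.r (Sum.inr j) p

lemma mem_NCprime {m n : ℕ} {x : Fin m → Γ} {g : Fin n → Γ} {P : Setoid (Fin m ⊕ Fin n)} :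
    P ∈ NCprime x g ↔ NonCrossing m n P ∧ ∀ p,
      orderedProd x (upSet P p) = orderedProd g (lowSet P p) ∧
      (upSet P p).card ≤ 1 ∧ (lowSet P p).Nonempty := Iff.rfl

lemma mem_upSet {m n : ℕ} {P : Setoid (Fin m ⊕ Fin n)} {p} {i : Fin m} :
    i ∈ upSet P p ↔ P.r (Sum.inl i) p := by
  simp [upSet]

lemma mem_lowSet {m n : ℕ} {P : Setoid (Fin m ⊕ Fin n)} {p} {j : Fin n} :
    j ∈ lowSet P p ↔ P.r (Sum.inr j) p := by
  simp [lowSet]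

lemma ιk_ne_qp {l k : ℕ} (z : Fin l ⊕ Fin k) : ιk l k z ≠ qp l k := by
  rcases z with i | j
  · simp [ιk, qp]
  · simp only [ιk, qp, Sum.map, Function.comp, ne_eq, Sum.elim_inr, Sum.inr.injEq]
    exact (Fin.castSucc_lt_last j).ne

lemma ιk_inj {l k : ℕ} : Function.Injective (ιk l k) := by
  rintro (i | j) (i' | j') h <;>
    simp only [ιk, Sum.map, Function.comp, id, Sum.elim_inl, Sum.elim_inr,
      Sum.inl.injEq, Sum.inr.injEq] at h
  · rw [h]
  · exact absurd h (by simp)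
  · exact absurd h (by simp)
  · rw [Fin.castSucc_injective _ h]

lemma surj_ιk {l k : ℕ} (y : Fin l ⊕ Fin (k + 1)) :
    y = qp l k ∨ ∃ z, y = ιk l k z := by
  rcases y with i | j
  · exact Or.inr ⟨Sum.inl i, rfl⟩
  · rcases Fin.eq_castSucc_or_eq_last j with ⟨j', rfl⟩ | rfl
    · exact Or.inr ⟨Sum.inr j', rfl⟩
    · exact Or.inl rfl

lemma ιk_mono_iff {l k : ℕ} (a b : Fin l ⊕ Fin k) :
    ncPos l (k + 1) (ιk l k a) < ncPos l (k + 1) (ιk l k b) ↔ ncPos l k a < ncPos l k b := by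
  rcases a with i | j <;> rcases b with i' | j'
  · exact Iff.rfl
  · have h1 := i.isLt
    have h2 := j'.isLt
    simp only [ιk, Sum.map, Function.comp, id, ncPos, Sum.elim_inl, Sum.elim_inr, Fin.coe_castSucc]
    omega
  · have h1 := i'.isLt
    have h2 := j.isLt
    simp only [ιk, Sum.map, Function.comp, id, ncPos, Sum.elim_inl, Sum.elim_inr, Fin.coe_castSucc]
    omega
  · have h1 := j.isLt
    have h2 := j'.isLt
    simp only [ιk, Sum.map, Function.comp, id, ncPos, Sum.elim_inl, Sum.elim_inr, Fin.coe_castSucc]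
    omega

lemma lowSet_eq_map {l k : ℕ} {P : Setoid (Fin l ⊕ Fin (k + 1))} {p}
    (hlast : ¬ P.r (Sum.inr (Fin.last k)) p) :
    lowSet P p = (Finset.univ.filter fun j : Fin k =>
      P.r (Sum.inr j.castSucc) p).map Fin.castSuccOrderEmb.toEmbedding := by
  ext z
  rw [mem_lowSet]
  constructor
  · intro hz
    rcases Fin.eq_castSucc_or_eq_last z with ⟨j', rfl⟩ | rfl
    · rw [castSucc_mem_map_iff, Finset.mem_filter]
      exact ⟨Finset.mem_univ _, hz⟩
    · exact absurd hz hlast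
  · intro hz
    rw [Finset.mem_map] at hz
    obtain ⟨j', hj', rfl⟩ := hz
    exact (Finset.mem_filter.mp hj').2

lemma lowSet_eq_insert_map {l k : ℕ} {P : Setoid (Fin l ⊕ Fin (k + 1))} {p}
    (hlast : P.r (Sum.inr (Fin.last k)) p) :
    lowSet P p = insert (Fin.last k) ((Finset.univ.filter fun j : Fin k =>
      P.r (Sum.inr j.castSucc) p).map Fin.castSuccOrderEmb.toEmbedding) := by
  ext z
  rw [mem_lowSet, Finset.mem_insert]
  constructor
  · intro hz
    rcases Fin.eq_castSucc_or_eq_last z with ⟨j', rfl⟩ | rfl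
    · right
      rw [castSucc_mem_map_iff, Finset.mem_filter]
      exact ⟨Finset.mem_univ _, hz⟩
    · exact Or.inl rfl
  · rintro (rfl | hz)
    · exact hlast
    · rw [Finset.mem_map] at hz
      obtain ⟨j', hj', rfl⟩ := hz
      exact (Finset.mem_filter.mp hj').2

/-- In a singleton-class situation the whole block of `qp` is `{qp}`. -/
lemma blockD {l k : ℕ} {P : Setoid (Fin l ⊕ Fin (k + 1))} (hU : ¬ hasUp P) (hM : ¬ moreLow P)
    {y} (h : P.r y (qp l k)) : y = qp l k := by
  rcases y with i | j
  · exact absurd ⟨i, h⟩ hU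
  · rcases Fin.eq_castSucc_or_eq_last j with ⟨j', rfl⟩ | rfl
    · exact absurd ⟨j', h⟩ hM
    · rfl

lemma upSet_comap_ιk {l k : ℕ} (P : Setoid (Fin l ⊕ Fin (k + 1))) (p' : Fin l ⊕ Fin k) :
    upSet (Setoid.comap (ιk l k) P) p' = upSet P (ιk l k p') := rfl

lemma lowSet_comap_ιk {l k : ℕ} (P : Setoid (Fin l ⊕ Fin (k + 1))) (p' : Fin l ⊕ Fin k) :
    lowSet (Setoid.comap (ιk l k) P) p' =
      Finset.univ.filter fun j : Fin k => P.r (Sum.inr j.castSucc) (ιk l k p') := rfl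

end Shared
section CaseD
variable {Γ : Type*} [Group Γ]

def extD {l k : ℕ} (P' : Setoid (Fin l ⊕ Fin k)) : Setoid (Fin l ⊕ Fin (k + 1)) where
  r a b := (a = qp l k ∧ b = qp l k) ∨ ∃ a' b', P'.r a' b' ∧ a = ιk l k a' ∧ b = ιk l k b'
  iseqv := by
    constructor
    · intro a
      rcases surj_ιk a with rfl | ⟨z, rfl⟩
      · exact Or.inl ⟨rfl, rfl⟩
      · exact Or.inr ⟨z, z, P'.refl z, rfl, rfl⟩
    · rintro a b (⟨rfl, rfl⟩ | ⟨a', b', h, rfl, rfl⟩)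
      · exact Or.inl ⟨rfl, rfl⟩
      · exact Or.inr ⟨b', a', P'.symm h, rfl, rfl⟩
    · rintro a b c (⟨rfl, rfl⟩ | ⟨a', b', h, rfl, rfl⟩) hbc
      · rcases hbc with ⟨-, h4⟩ | ⟨b', c', h', hb, rfl⟩
        · exact Or.inl ⟨rfl, h4⟩
        · exact absurd hb.symm (ιk_ne_qp b')
      · rcases hbc with ⟨h3, h4⟩ | ⟨b'', c', h', hb, rfl⟩
        · exact absurd h3 (ιk_ne_qp b')
        · have hbb : b' = b'' := ιk_inj hb
          exact Or.inr ⟨a', c', P'.trans h (hbb ▸ h'), rfl, rfl⟩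

lemma extD_rel_iff {l k : ℕ} (P' : Setoid (Fin l ⊕ Fin k)) (a b : Fin l ⊕ Fin k) :
    (extD P').r (ιk l k a) (ιk l k b) ↔ P'.r a b := by
  constructor
  · rintro (⟨h1, -⟩ | ⟨a', b', h, ha, hb⟩)
    · exact absurd h1 (ιk_ne_qp a)
    · rw [ιk_inj ha, ιk_inj hb]
      exact h
  · intro h
    exact Or.inr ⟨a, b, h, rfl, rfl⟩

lemma extD_rel_qp {l k : ℕ} (P' : Setoid (Fin l ⊕ Fin k)) (y : Fin l ⊕ Fin (k + 1)) :
    (extD P').r y (qp l k) ↔ y = qp l k := by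
  constructor
  · rintro (⟨h1, -⟩ | ⟨a', b', -, -, hb⟩)
    · exact h1
    · exact absurd hb.symm (ιk_ne_qp b')
  · rintro rfl
    exact Or.inl ⟨rfl, rfl⟩

lemma restrictD_mem {l k : ℕ} {g : Fin (k + 1) → Γ} {x : Fin l → Γ}
    {P : Setoid (Fin l ⊕ Fin (k + 1))}
    (hP : P ∈ NCprime x g) (hU : ¬ hasUp P) (hM : ¬ moreLow P) :
    Setoid.comap (ιk l k) P ∈ NCprime x (fun j => g j.castSucc) := by
  rw [mem_NCprime] at hP ⊢
  refine ⟨nonCrossing_comap _ (fun a b => (ιk_mono_iff a b).mpr) hP.1, fun p' => ?_⟩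
  have hqp : ¬ P.r (Sum.inr (Fin.last k)) (ιk l k p') := by
    intro hc
    exact (ιk_ne_qp p') (blockD hU hM (P.symm hc))
  obtain ⟨hprod, hcard, hne⟩ := hP.2 (ιk l k p')
  have hL := lowSet_eq_map (P := P) (p := ιk l k p') hqp
  refine ⟨?_, ?_, ?_⟩
  · rw [upSet_comap_ιk, lowSet_comap_ιk, hprod, hL, orderedProd_map_castSucc]
  · rw [upSet_comap_ιk]
    exact hcard
  · rw [hL] at hne
    rw [lowSet_comap_ιk]
    exact Finset.map_nonempty.mp hne

lemma extD_mem {l k : ℕ} {g : Fin (k + 1) → Γ} {x : Fin l → Γ}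
    {P' : Setoid (Fin l ⊕ Fin k)}
    (hP' : P' ∈ NCprime x (fun j => g j.castSucc)) (hg : g (Fin.last k) = 1) :
    extD P' ∈ NCprime x g ∧ ¬ hasUp (extD P') ∧ ¬ moreLow (extD P') := by
  rw [mem_NCprime] at hP'
  have key : ∀ y z, (extD P').r y z → (y = qp l k ↔ z = qp l k) := by
    intro y z h
    constructor
    · rintro rfl
      exact (extD_rel_qp P' z).mp ((extD P').symm h)
    · rintro rfl
      exact (extD_rel_qp P' y).mp h
  refine ⟨mem_NCprime.mpr ⟨?nc, ?cond⟩, ?hu, ?ml⟩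
  case hu =>
    rintro ⟨i, hi⟩
    exact ιk_ne_qp (Sum.inl i) ((extD_rel_qp P' _).mp hi)
  case ml =>
    rintro ⟨j, hj⟩
    exact ιk_ne_qp (Sum.inr j) ((extD_rel_qp P' _).mp hj)
  case nc =>
    rintro ⟨a, b, c, d, h1, h2, h3, hac, hbd, hab⟩
    have hane : a ≠ qp l k := by
      intro ha
      have hc : c = qp l k := (key a c hac).mp ha
      have h12 := h1.trans h2
      rw [ha, hc] at h12
      exact lt_irrefl _ h12
    have hcne : c ≠ qp l k := fun hc => hane ((key a c hac).mpr hc)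
    have hbne : b ≠ qp l k := by
      intro hb
      have hd : d = qp l k := (key b d hbd).mp hb
      have h23 := h2.trans h3
      rw [hb, hd] at h23
      exact lt_irrefl _ h23
    have hdne : d ≠ qp l k := fun hd => hbne ((key b d hbd).mpr hd)
    obtain ⟨a', rfl⟩ := (surj_ιk a).resolve_left hane
    obtain ⟨b', rfl⟩ := (surj_ιk b).resolve_left hbne
    obtain ⟨c', rfl⟩ := (surj_ιk c).resolve_left hcne
    obtain ⟨d', rfl⟩ := (surj_ιk d).resolve_left hdne
    exact hP'.1 ⟨a', b', c', d', (ιk_mono_iff _ _).mp h1, (ιk_mono_iff _ _).mp h2,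
      (ιk_mono_iff _ _).mp h3, (extD_rel_iff P' _ _).mp hac, (extD_rel_iff P' _ _).mp hbd,
      fun hh => hab ((extD_rel_iff P' _ _).mpr hh)⟩
  case cond =>
    intro p
    rcases surj_ιk p with rfl | ⟨p', rfl⟩
    · have hu : upSet (extD P') (qp l k) = ∅ := by
        rw [Finset.eq_empty_iff_forall_notMem]
        intro i hi
        exact ιk_ne_qp (Sum.inl i) ((extD_rel_qp P' _).mp (mem_upSet.mp hi))
      have hl : lowSet (extD P') (qp l k) = {Fin.last k} := by
        ext z
        rw [mem_lowSet, extD_rel_qp, Finset.mem_singleton, qp, Sum.inr.injEq]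
      rw [hu, hl, orderedProd_empty, orderedProd_singleton, hg]
      refine ⟨rfl, by simp, ⟨Fin.last k, Finset.mem_singleton_self _⟩⟩
    · have hu : upSet (extD P') (ιk l k p') = upSet P' p' := by
        ext i
        rw [mem_upSet, mem_upSet]
        exact extD_rel_iff P' (Sum.inl i) p'
      have hqnot : ¬ (extD P').r (Sum.inr (Fin.last k)) (ιk l k p') := by
        intro hc
        exact ιk_ne_qp p' ((extD_rel_qp P' _).mp ((extD P').symm hc))
      have hl : lowSet (extD P') (ιk l k p') =
          (lowSet P' p').map Fin.castSuccOrderEmb.toEmbedding := by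
        rw [lowSet_eq_map hqnot]
        congr 1
        ext j
        rw [Finset.mem_filter, mem_lowSet]
        refine ⟨fun hh => (extD_rel_iff P' (Sum.inr j) p').mp hh.2,
          fun hh => ⟨Finset.mem_univ _, (extD_rel_iff P' (Sum.inr j) p').mpr hh⟩⟩
      obtain ⟨hprod, hcard, hne⟩ := hP'.2 p'
      refine ⟨?_, ?_, ?_⟩
      · rw [hu, hl, orderedProd_map_castSucc, hprod]
      · rw [hu]; exact hcard
      · rw [hl]
        exact Finset.map_nonempty.mpr hne

lemma extD_restrictD {l k : ℕ} {P : Setoid (Fin l ⊕ Fin (k + 1))}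
    (hU : ¬ hasUp P) (hM : ¬ moreLow P) :
    extD (Setoid.comap (ιk l k) P) = P := by
  apply Setoid.ext
  intro a b
  constructor
  · rintro (⟨rfl, rfl⟩ | ⟨a', b', h, rfl, rfl⟩)
    · exact P.refl _
    · exact h
  · intro h
    rcases surj_ιk a with rfl | ⟨a', rfl⟩
    · rcases surj_ιk b with rfl | ⟨b', rfl⟩
      · exact Or.inl ⟨rfl, rfl⟩
      · exact absurd (blockD hU hM (P.symm h)) (ιk_ne_qp b')
    · rcases surj_ιk b with rfl | ⟨b', rfl⟩
      · exact absurd (blockD hU hM h) (ιk_ne_qp a')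
      · exact Or.inr ⟨a', b', h, rfl, rfl⟩

lemma restrictD_extD {l k : ℕ} (P' : Setoid (Fin l ⊕ Fin k)) :
    Setoid.comap (ιk l k) (extD P') = P' := by
  apply Setoid.ext
  intro a b
  exact extD_rel_iff P' a b

lemma caseD {l k : ℕ} (g : Fin (k + 1) → Γ) (x : Fin l → Γ) :
    Nat.card {P : Setoid (Fin l ⊕ Fin (k + 1)) //
        (P ∈ NCprime x g ∧ ¬ hasUp P) ∧ ¬ moreLow P}
      = if g (Fin.last k) = 1 then
          Nat.card {P' : Setoid (Fin l ⊕ Fin k) // P' ∈ NCprime x (fun j => g j.castSucc)}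
        else 0 := by
  by_cases hg : g (Fin.last k) = 1
  · rw [if_pos hg]
    apply Nat.card_congr
    refine ⟨fun P => ⟨Setoid.comap (ιk l k) P.val, restrictD_mem P.2.1.1 P.2.1.2 P.2.2⟩,
      fun P' => ⟨extD P'.val, ?_⟩, fun P => ?_, fun P' => ?_⟩
    · obtain ⟨h1, h2, h3⟩ := extD_mem P'.2 hg
      exact ⟨⟨h1, h2⟩, h3⟩
    · exact Subtype.ext (extD_restrictD P.2.1.2 P.2.2)
    · exact Subtype.ext (restrictD_extD P'.val)
  · rw [if_neg hg]
    apply card_eq_zero_of_none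
    rintro P ⟨⟨hP, hU⟩, hM⟩
    apply hg
    rw [mem_NCprime] at hP
    obtain ⟨hprod, -, -⟩ := hP.2 (qp l k)
    have hu : upSet P (qp l k) = ∅ := by
      rw [Finset.eq_empty_iff_forall_notMem]
      intro i hi
      exact hU ⟨i, mem_upSet.mp hi⟩
    have hl : lowSet P (qp l k) = {Fin.last k} := by
      ext z
      rw [mem_lowSet, Finset.mem_singleton]
      constructor
      · intro hz
        rcases Fin.eq_castSucc_or_eq_last z with ⟨j', rfl⟩ | rfl
        · exact absurd ⟨j', hz⟩ hM
        · rfl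
      · rintro rfl
        exact P.refl _
    rw [hu, hl, orderedProd_empty, orderedProd_singleton] at hprod
    exact hprod.symm

end CaseD
section CaseC
variable {Γ : Type*} [Group Γ]

lemma comap_r {α β : Type*} (f : α → β) (r : Setoid β) (x y : α) :
    (Setoid.comap f r).r x y ↔ r.r (f x) (f y) := Iff.rfl

def eC (l k : ℕ) : (Fin l ⊕ Fin (k + 1)) ≃ (Fin (l + 1) ⊕ Fin k) where
  toFun := Sum.elim (fun i => Sum.inl i.castSucc)
    (fun j => Fin.lastCases (Sum.inl (Fin.last l)) (fun j' => Sum.inr j') j)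
  invFun := Sum.elim (fun i => Fin.lastCases (Sum.inr (Fin.last k)) (fun i' => Sum.inl i') i)
    (fun j' => Sum.inr j'.castSucc)
  left_inv := by
    rintro (i | j)
    · simp
    · rcases Fin.eq_castSucc_or_eq_last j with ⟨j', rfl⟩ | rfl
      · simp
      · simp
  right_inv := by
    rintro (i' | j')
    · rcases Fin.eq_castSucc_or_eq_last i' with ⟨i, rfl⟩ | rfl
      · simp
      · simp
    · simp

lemma eC_inl {l k : ℕ} (i : Fin l) : eC l k (Sum.inl i) = Sum.inl i.castSucc := rfl

lemma eC_inr_castSucc {l k : ℕ} (j : Fin k) : eC l k (Sum.inr j.castSucc) = Sum.inr j := by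
  simp [eC]

lemma eC_qp {l k : ℕ} : eC l k (qp l k) = Sum.inl (Fin.last l) := by
  simp [eC, qp]

lemma eC_symm_inl_castSucc {l k : ℕ} (i : Fin l) :
    (eC l k).symm (Sum.inl i.castSucc) = Sum.inl i := by
  simp [eC]

lemma eC_symm_inl_last {l k : ℕ} : (eC l k).symm (Sum.inl (Fin.last l)) = qp l k := by
  simp [eC, qp]

lemma eC_symm_inr {l k : ℕ} (j : Fin k) : (eC l k).symm (Sum.inr j) = Sum.inr j.castSucc := rfl

lemma ncPos_eC {l k : ℕ} (p : Fin l ⊕ Fin (k + 1)) :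
    ncPos (l + 1) k (eC l k p) = ncPos l (k + 1) p := by
  rcases p with i | j
  · have := i.isLt
    simp [eC, ncPos]
  · rcases Fin.eq_castSucc_or_eq_last j with ⟨j', rfl⟩ | rfl
    · have := j'.isLt
      simp only [eC, Equiv.coe_fn_mk, Sum.elim_inr, Fin.lastCases_castSucc, ncPos,
        Fin.coe_castSucc]
      omega
    · simp only [eC, Equiv.coe_fn_mk, Sum.elim_inr, Fin.lastCases_last, ncPos, Sum.elim_inl,
        Sum.elim_inr, Fin.val_last]
      omega

lemma ncPos_eC_symm {l k : ℕ} (p' : Fin (l + 1) ⊕ Fin k) :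
    ncPos l (k + 1) ((eC l k).symm p') = ncPos (l + 1) k p' := by
  rw [← ncPos_eC ((eC l k).symm p'), Equiv.apply_symm_apply]

lemma two_mem_card_le_one {m : ℕ} {s : Finset (Fin m)} (hcard : s.card ≤ 1) {a b : Fin m}
    (ha : a ∈ s) (hb : b ∈ s) : a = b :=
  Finset.card_le_one.mp hcard a ha b hb

lemma forwardC_mem {l k : ℕ} {g : Fin (k + 1) → Γ} {x : Fin l → Γ}
    {P : Setoid (Fin l ⊕ Fin (k + 1))}
    (hP : P ∈ NCprime x g) (hU : ¬ hasUp P) (hM : moreLow P) :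
    Setoid.comap (eC l k).symm P ∈
      NCprime (Fin.snoc x (g (Fin.last k))⁻¹) (fun j => g j.castSucc) := by
  rw [mem_NCprime] at hP ⊢
  obtain ⟨j₀, hj₀⟩ := hM
  constructor
  · rintro ⟨a, b, c, d, h1, h2, h3, hac, hbd, hab⟩
    refine hP.1 ⟨(eC l k).symm a, (eC l k).symm b, (eC l k).symm c, (eC l k).symm d,
      ?_, ?_, ?_, hac, hbd, hab⟩ <;> rw [ncPos_eC_symm, ncPos_eC_symm] <;> assumption
  · intro p'
    obtain ⟨hprod, hcard, hne⟩ := hP.2 ((eC l k).symm p')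
    have hQlow : lowSet (Setoid.comap (eC l k).symm P) p' =
        Finset.univ.filter (fun j : Fin k =>
          P.r (Sum.inr j.castSucc) ((eC l k).symm p')) := rfl
    by_cases hq : P.r (Sum.inr (Fin.last k)) ((eC l k).symm p')
    · have hUQ : upSet (Setoid.comap (eC l k).symm P) p' = {Fin.last l} := by
        ext i'
        rw [mem_upSet, Finset.mem_singleton]
        constructor
        · intro hi'
          rcases Fin.eq_castSucc_or_eq_last i' with ⟨i, rfl⟩ | rfl
          · exfalso
            apply hU
            rw [comap_r, eC_symm_inl_castSucc] at hi'
            exact ⟨i, P.trans hi' (P.symm hq)⟩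
          · rfl
        · rintro rfl
          rw [comap_r, eC_symm_inl_last]
          exact hq
      have hUP : upSet P ((eC l k).symm p') = ∅ := by
        rw [Finset.eq_empty_iff_forall_notMem]
        intro i hi
        exact hU ⟨i, P.trans (mem_upSet.mp hi) (P.symm hq)⟩
      have hLP : lowSet P ((eC l k).symm p') = insert (Fin.last k)
          ((lowSet (Setoid.comap (eC l k).symm P) p').map Fin.castSuccOrderEmb.toEmbedding) := by
        rw [lowSet_eq_insert_map hq, hQlow]
      rw [hUP, orderedProd_empty, hLP, orderedProd_insert_last] at hprod
      refine ⟨?_, ?_, ?_⟩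
      · rw [hUQ, orderedProd_singleton, Fin.snoc_last]
        exact (eq_inv_of_mul_eq_one_left hprod.symm).symm
      · rw [hUQ]
        simp
      · refine ⟨j₀, mem_lowSet.mpr ?_⟩
        rw [comap_r, eC_symm_inr]
        exact P.trans hj₀ hq
    · have hUQ : upSet (Setoid.comap (eC l k).symm P) p' =
          (upSet P ((eC l k).symm p')).map Fin.castSuccOrderEmb.toEmbedding := by
        ext i'
        rw [mem_upSet]
        constructor
        · intro hi'
          rcases Fin.eq_castSucc_or_eq_last i' with ⟨i, rfl⟩ | rfl
          · rw [comap_r, eC_symm_inl_castSucc] at hi'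
            rw [castSucc_mem_map_iff, mem_upSet]
            exact hi'
          · rw [comap_r, eC_symm_inl_last] at hi'
            exact absurd hi' hq
        · intro hi'
          rw [Finset.mem_map] at hi'
          obtain ⟨i, hi, rfl⟩ := hi'
          show (Setoid.comap (eC l k).symm P).r (Sum.inl i.castSucc) p'
          rw [comap_r, eC_symm_inl_castSucc]
          exact mem_upSet.mp hi
      have hLP : lowSet P ((eC l k).symm p') =
          (lowSet (Setoid.comap (eC l k).symm P) p').map Fin.castSuccOrderEmb.toEmbedding := by
        rw [lowSet_eq_map hq, hQlow]
      refine ⟨?_, ?_, ?_⟩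
      · rw [hUQ, orderedProd_map_castSucc,
          orderedProd_congr (fun i => Fin.snoc (α := fun _ => Γ) x (g (Fin.last k))⁻¹ i.castSucc) x
            (upSet P ((eC l k).symm p'))
            (fun i _ => Fin.snoc_castSucc (α := fun _ => Γ) (g (Fin.last k))⁻¹ x i),
          hprod, hLP, orderedProd_map_castSucc]
      · rw [hUQ, Finset.card_map]
        exact hcard
      · rw [hLP] at hne
        exact Finset.map_nonempty.mp hne

lemma backwardC_mem {l k : ℕ} {g : Fin (k + 1) → Γ} {x : Fin l → Γ}
    {P' : Setoid (Fin (l + 1) ⊕ Fin k)}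
    (hP' : P' ∈ NCprime (Fin.snoc x (g (Fin.last k))⁻¹) (fun j => g j.castSucc)) :
    Setoid.comap (eC l k) P' ∈ NCprime x g ∧ ¬ hasUp (Setoid.comap (eC l k) P') ∧
      moreLow (Setoid.comap (eC l k) P') := by
  rw [mem_NCprime] at hP'
  have relc : ∀ (j : Fin k) (p : Fin l ⊕ Fin (k + 1)),
      (Setoid.comap (eC l k) P').r (Sum.inr j.castSucc) p ↔ P'.r (Sum.inr j) (eC l k p) := by
    intro j p
    rw [comap_r, eC_inr_castSucc]
  have relq : ∀ (p : Fin l ⊕ Fin (k + 1)),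
      (Setoid.comap (eC l k) P').r (Sum.inr (Fin.last k)) p ↔
        P'.r (Sum.inl (Fin.last l)) (eC l k p) := by
    intro p
    rw [comap_r, show (eC l k) (Sum.inr (Fin.last k)) = Sum.inl (Fin.last l) from eC_qp]
  refine ⟨mem_NCprime.mpr ⟨?_, ?_⟩, ?_, ?_⟩
  · rintro ⟨a, b, c, d, h1, h2, h3, hac, hbd, hab⟩
    refine hP'.1 ⟨eC l k a, eC l k b, eC l k c, eC l k d, ?_, ?_, ?_, hac, hbd, hab⟩ <;>
      rw [ncPos_eC, ncPos_eC] <;> assumption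
  · intro p
    obtain ⟨hprod, hcard, hne⟩ := hP'.2 (eC l k p)
    have hQlow : Finset.univ.filter (fun j : Fin k =>
          (Setoid.comap (eC l k) P').r (Sum.inr j.castSucc) p) = lowSet P' (eC l k p) := by
      ext j
      rw [Finset.mem_filter, mem_lowSet]
      exact ⟨fun hh => (relc j p).mp hh.2, fun hh => ⟨Finset.mem_univ _, (relc j p).mpr hh⟩⟩
    by_cases hm : P'.r (Sum.inl (Fin.last l)) (eC l k p)
    · have hUP' : upSet P' (eC l k p) = {Fin.last l} := by
        have hlastmem : Fin.last l ∈ upSet P' (eC l k p) := mem_upSet.mpr hm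
        ext i'
        rw [mem_upSet, Finset.mem_singleton]
        exact ⟨fun hi' => two_mem_card_le_one hcard (mem_upSet.mpr hi') hlastmem,
          fun hh => hh ▸ hm⟩
      have hUR : upSet (Setoid.comap (eC l k) P') p = ∅ := by
        rw [Finset.eq_empty_iff_forall_notMem]
        intro i hi
        have h' : (Setoid.comap (eC l k) P').r (Sum.inl i) p := mem_upSet.mp hi
        have h2 : Fin.castSucc i ∈ upSet P' (eC l k p) := mem_upSet.mpr h'
        rw [hUP', Finset.mem_singleton] at h2
        exact (Fin.castSucc_lt_last i).ne h2
      have hLR : lowSet (Setoid.comap (eC l k) P') p = insert (Fin.last k)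
          ((lowSet P' (eC l k p)).map Fin.castSuccOrderEmb.toEmbedding) := by
        rw [lowSet_eq_insert_map ((relq p).mpr hm), hQlow]
      rw [hUP', orderedProd_singleton, Fin.snoc_last] at hprod
      refine ⟨?_, ?_, ?_⟩
      · rw [hUR, orderedProd_empty, hLR, orderedProd_insert_last, ← hprod, inv_mul_cancel]
      · rw [hUR]
        simp
      · exact ⟨Fin.last k, by
          rw [hLR]
          exact Finset.mem_insert_self _ _⟩
    · have hUP' : upSet P' (eC l k p) =
          (upSet (Setoid.comap (eC l k) P') p).map Fin.castSuccOrderEmb.toEmbedding := by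
        ext i'
        rw [mem_upSet]
        constructor
        · intro hi'
          rcases Fin.eq_castSucc_or_eq_last i' with ⟨i, rfl⟩ | rfl
          · rw [castSucc_mem_map_iff, mem_upSet]
            exact hi'
          · exact absurd hi' hm
        · intro hi'
          rw [Finset.mem_map] at hi'
          obtain ⟨i, hi, rfl⟩ := hi'
          have h' : (Setoid.comap (eC l k) P').r (Sum.inl i) p := mem_upSet.mp hi
          exact h'
      have hLR : lowSet (Setoid.comap (eC l k) P') p =
          (lowSet P' (eC l k p)).map Fin.castSuccOrderEmb.toEmbedding := by
        rw [lowSet_eq_map (fun hh => hm ((relq p).mp hh)), hQlow]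
      refine ⟨?_, ?_, ?_⟩
      · rw [hUP', orderedProd_map_castSucc,
          orderedProd_congr (fun i => Fin.snoc (α := fun _ => Γ) x (g (Fin.last k))⁻¹ i.castSucc) x
            (upSet (Setoid.comap (eC l k) P') p)
            (fun i _ => Fin.snoc_castSucc (α := fun _ => Γ) (g (Fin.last k))⁻¹ x i)] at hprod
        rw [hprod, hLR, orderedProd_map_castSucc]
      · rw [hUP', Finset.card_map] at hcard
        exact hcard
      · rw [hLR]
        exact Finset.map_nonempty.mpr hne
  · rintro ⟨i, hi⟩
    have hcard := (hP'.2 (Sum.inl (Fin.last l))).2.1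
    have h1 : Fin.castSucc i ∈ upSet P' (Sum.inl (Fin.last l)) := by
      rw [mem_upSet]
      have : P'.r (Sum.inl i.castSucc) (eC l k (qp l k)) := hi
      rwa [eC_qp] at this
    have h2 : Fin.last l ∈ upSet P' (Sum.inl (Fin.last l)) := mem_upSet.mpr (P'.refl _)
    exact (Fin.castSucc_lt_last i).ne (two_mem_card_le_one hcard h1 h2)
  · obtain ⟨j₀, hj₀⟩ := (hP'.2 (Sum.inl (Fin.last l))).2.2
    refine ⟨j₀, (relc j₀ (qp l k)).mpr ?_⟩
    rw [eC_qp]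
    exact mem_lowSet.mp hj₀

lemma caseC {l k : ℕ} (g : Fin (k + 1) → Γ) (x : Fin l → Γ) :
    Nat.card {P : Setoid (Fin l ⊕ Fin (k + 1)) //
        (P ∈ NCprime x g ∧ ¬ hasUp P) ∧ moreLow P}
      = Nat.card {P' : Setoid (Fin (l + 1) ⊕ Fin k) //
          P' ∈ NCprime (Fin.snoc x (g (Fin.last k))⁻¹) (fun j => g j.castSucc)} := by
  apply Nat.card_congr
  refine ⟨fun P => ⟨Setoid.comap (eC l k).symm P.val, forwardC_mem P.2.1.1 P.2.1.2 P.2.2⟩,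
    fun P' => ⟨Setoid.comap (eC l k) P'.val, by
      obtain ⟨h1, h2, h3⟩ := backwardC_mem P'.2
      exact ⟨⟨h1, h2⟩, h3⟩⟩,
    fun P => Subtype.ext ?_, fun P' => Subtype.ext ?_⟩
  · apply Setoid.ext
    intro a b
    rw [comap_r, comap_r, Equiv.symm_apply_apply, Equiv.symm_apply_apply]
  · apply Setoid.ext
    intro a b
    rw [comap_r, comap_r, Equiv.apply_symm_apply, Equiv.apply_symm_apply]

end CaseC
section CaseA
variable {Γ : Type*} [Group Γ]

/-- Crossing lemma: an upper point in the block of the last lower point is the last upper. -/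
lemma upQ {l k : ℕ} {g : Fin (k + 1) → Γ} {x : Fin (l + 1) → Γ}
    {P : Setoid (Fin (l + 1) ⊕ Fin (k + 1))} (hP : P ∈ NCprime x g)
    {i : Fin (l + 1)} (h : P.r (Sum.inl i) (qp (l + 1) k)) : i = Fin.last l := by
  by_contra hne
  rw [mem_NCprime] at hP
  obtain ⟨j, hj⟩ := (hP.2 (Sum.inl (Fin.last l))).2.2
  have hj' : P.r (Sum.inr j) (Sum.inl (Fin.last l)) := mem_lowSet.mp hj
  have hcardq := (hP.2 (qp (l + 1) k)).2.1
  have hine : i ∈ upSet P (qp (l + 1) k) := mem_upSet.mpr h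
  by_cases hjl : j = Fin.last k
  · subst hjl
    have h2 : Fin.last l ∈ upSet P (qp (l + 1) k) := mem_upSet.mpr (P.symm hj')
    exact hne (two_mem_card_le_one hcardq hine h2)
  · obtain ⟨j', rfl⟩ := (Fin.eq_castSucc_or_eq_last j).resolve_right hjl
    have hival : (i : ℕ) < l := by
      have h1 := i.isLt
      have h2 : (i : ℕ) ≠ l := fun hh => hne (Fin.ext (by simp [hh, Fin.val_last]))
      omega
    have hjval := j'.isLt
    refine hP.1 ⟨Sum.inl i, Sum.inl (Fin.last l), qp (l + 1) k, Sum.inr j'.castSucc,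
      ?_, ?_, ?_, h, P.symm hj', ?_⟩
    · simp only [ncPos, Sum.elim_inl, Fin.val_last]
      omega
    · simp only [ncPos, qp, Sum.elim_inl, Sum.elim_inr, Fin.val_last]
      omega
    · simp only [ncPos, qp, Sum.elim_inr, Fin.val_last, Fin.coe_castSucc]
      omega
    · intro hrel
      exact hne (two_mem_card_le_one hcardq hine
        (mem_upSet.mpr (P.trans (P.symm hrel) h)))

def ιA (l k : ℕ) : Fin l ⊕ Fin k → Fin (l + 1) ⊕ Fin (k + 1) :=
  Sum.map Fin.castSucc Fin.castSucc

lemma ιA_ne_qp {l k : ℕ} (z : Fin l ⊕ Fin k) : ιA l k z ≠ qp (l + 1) k := by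
  rcases z with i | j
  · simp [ιA, qp]
  · simp only [ιA, qp, Sum.map, Function.comp, ne_eq, Sum.elim_inr, Sum.inr.injEq]
    exact (Fin.castSucc_lt_last j).ne

lemma ιA_ne_lastU {l k : ℕ} (z : Fin l ⊕ Fin k) : ιA l k z ≠ Sum.inl (Fin.last l) := by
  rcases z with i | j
  · simp only [ιA, Sum.map, Function.comp, ne_eq, Sum.elim_inl, Sum.inl.injEq]
    exact (Fin.castSucc_lt_last i).ne
  · simp [ιA]

lemma ιA_inj {l k : ℕ} : Function.Injective (ιA l k) := by
  rintro (i | j) (i' | j') h <;>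
    simp only [ιA, Sum.map, Function.comp, Sum.elim_inl, Sum.elim_inr,
      Sum.inl.injEq, Sum.inr.injEq] at h
  · rw [Fin.castSucc_injective _ h]
  · exact absurd h (by simp)
  · exact absurd h (by simp)
  · rw [Fin.castSucc_injective _ h]

lemma surj_ιA {l k : ℕ} (y : Fin (l + 1) ⊕ Fin (k + 1)) :
    y = Sum.inl (Fin.last l) ∨ y = qp (l + 1) k ∨ ∃ z, y = ιA l k z := by
  rcases y with i | j
  · rcases Fin.eq_castSucc_or_eq_last i with ⟨i', rfl⟩ | rfl
    · exact Or.inr (Or.inr ⟨Sum.inl i', rfl⟩)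
    · exact Or.inl rfl
  · rcases Fin.eq_castSucc_or_eq_last j with ⟨j', rfl⟩ | rfl
    · exact Or.inr (Or.inr ⟨Sum.inr j', rfl⟩)
    · exact Or.inr (Or.inl rfl)

lemma ιA_mono_iff {l k : ℕ} (a b : Fin l ⊕ Fin k) :
    ncPos (l + 1) (k + 1) (ιA l k a) < ncPos (l + 1) (k + 1) (ιA l k b) ↔
      ncPos l k a < ncPos l k b := by
  rcases a with i | j <;> rcases b with i' | j'
  · simp [ιA, Sum.map, Function.comp, ncPos]
  · have h1 := i.isLt
    have h2 := j'.isLt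
    simp only [ιA, Sum.map, Function.comp, ncPos, Sum.elim_inl, Sum.elim_inr,
      Fin.coe_castSucc]
    omega
  · have h1 := i'.isLt
    have h2 := j.isLt
    simp only [ιA, Sum.map, Function.comp, ncPos, Sum.elim_inl, Sum.elim_inr,
      Fin.coe_castSucc]
    omega
  · have h1 := j.isLt
    have h2 := j'.isLt
    simp only [ιA, Sum.map, Function.comp, ncPos, Sum.elim_inl, Sum.elim_inr,
      Fin.coe_castSucc]
    omega

lemma posA_not_between {l k : ℕ} (y : Fin (l + 1) ⊕ Fin (k + 1)) :
    ¬ (l < ncPos (l + 1) (k + 1) y ∧ ncPos (l + 1) (k + 1) y < l + 1) := by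
  rcases y with i | j
  · have := i.isLt
    simp only [ncPos, Sum.elim_inl]
    omega
  · simp only [ncPos, Sum.elim_inr]
    omega

lemma posA_lastU {l k : ℕ} : ncPos (l + 1) (k + 1) (Sum.inl (Fin.last l)) = l := by
  simp [ncPos]

lemma posA_qp {l k : ℕ} : ncPos (l + 1) (k + 1) (qp (l + 1) k) = l + 1 := by
  simp only [ncPos, qp, Sum.elim_inr, Fin.val_last]
  omega

/-- generic: if the last upper is not in the class of `p`, the upper set comes from `Fin m`. -/
lemma upSet_eq_map {m n : ℕ} {P : Setoid (Fin (m + 1) ⊕ Fin n)} {p}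
    (hlast : ¬ P.r (Sum.inl (Fin.last m)) p) :
    upSet P p = (Finset.univ.filter fun i : Fin m =>
      P.r (Sum.inl i.castSucc) p).map Fin.castSuccOrderEmb.toEmbedding := by
  ext z
  rw [mem_upSet]
  constructor
  · intro hz
    rcases Fin.eq_castSucc_or_eq_last z with ⟨i', rfl⟩ | rfl
    · rw [castSucc_mem_map_iff, Finset.mem_filter]
      exact ⟨Finset.mem_univ _, hz⟩
    · exact absurd hz hlast
  · intro hz
    rw [Finset.mem_map] at hz
    obtain ⟨i', hi', rfl⟩ := hz
    exact (Finset.mem_filter.mp hi').2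

lemma upSet_comap_ιA {l k : ℕ} (P : Setoid (Fin (l + 1) ⊕ Fin (k + 1))) (p' : Fin l ⊕ Fin k) :
    upSet (Setoid.comap (ιA l k) P) p' =
      Finset.univ.filter fun i : Fin l => P.r (Sum.inl i.castSucc) (ιA l k p') := rfl

lemma lowSet_comap_ιA {l k : ℕ} (P : Setoid (Fin (l + 1) ⊕ Fin (k + 1))) (p' : Fin l ⊕ Fin k) :
    lowSet (Setoid.comap (ιA l k) P) p' =
      Finset.univ.filter fun j : Fin k => P.r (Sum.inr j.castSucc) (ιA l k p') := rfl

def extA {l k : ℕ} (P' : Setoid (Fin l ⊕ Fin k)) : Setoid (Fin (l + 1) ⊕ Fin (k + 1)) where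
  r a b := ((a = Sum.inl (Fin.last l) ∨ a = qp (l + 1) k) ∧
            (b = Sum.inl (Fin.last l) ∨ b = qp (l + 1) k)) ∨
           ∃ a' b', P'.r a' b' ∧ a = ιA l k a' ∧ b = ιA l k b'
  iseqv := by
    constructor
    · intro a
      rcases surj_ιA a with rfl | rfl | ⟨z, rfl⟩
      · exact Or.inl ⟨Or.inl rfl, Or.inl rfl⟩
      · exact Or.inl ⟨Or.inr rfl, Or.inr rfl⟩
      · exact Or.inr ⟨z, z, P'.refl z, rfl, rfl⟩
    · rintro a b (⟨h1, h2⟩ | ⟨a', b', h, rfl, rfl⟩)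
      · exact Or.inl ⟨h2, h1⟩
      · exact Or.inr ⟨b', a', P'.symm h, rfl, rfl⟩
    · rintro a b c (⟨h1, h2⟩ | ⟨a', b', h, rfl, rfl⟩) hbc
      · rcases hbc with ⟨h3, h4⟩ | ⟨b', c', h', rfl, rfl⟩
        · exact Or.inl ⟨h1, h4⟩
        · rcases h2 with h2 | h2
          · exact absurd h2 (ιA_ne_lastU b')
          · exact absurd h2 (ιA_ne_qp b')
      · rcases hbc with ⟨h3, h4⟩ | ⟨b'', c', h', hb, rfl⟩
        · rcases h3 with h3 | h3
          · exact absurd h3 (ιA_ne_lastU b')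
          · exact absurd h3 (ιA_ne_qp b')
        · have hbb : b' = b'' := ιA_inj hb
          exact Or.inr ⟨a', c', P'.trans h (hbb ▸ h'), rfl, rfl⟩

lemma extA_rel_iff {l k : ℕ} (P' : Setoid (Fin l ⊕ Fin k)) (a b : Fin l ⊕ Fin k) :
    (extA P').r (ιA l k a) (ιA l k b) ↔ P'.r a b := by
  constructor
  · rintro (⟨h1 | h1, -⟩ | ⟨a', b', h, ha, hb⟩)
    · exact absurd h1 (ιA_ne_lastU a)
    · exact absurd h1 (ιA_ne_qp a)
    · rw [ιA_inj ha, ιA_inj hb]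
      exact h
  · intro h
    exact Or.inr ⟨a, b, h, rfl, rfl⟩

lemma extA_rel_pair {l k : ℕ} (P' : Setoid (Fin l ⊕ Fin k)) (y : Fin (l + 1) ⊕ Fin (k + 1))
    {z} (hz : z = Sum.inl (Fin.last l) ∨ z = qp (l + 1) k) :
    (extA P').r y z ↔ (y = Sum.inl (Fin.last l) ∨ y = qp (l + 1) k) := by
  constructor
  · rintro (⟨h1, -⟩ | ⟨a', b', -, rfl, rfl⟩)
    · exact h1
    · rcases hz with hz | hz
      · exact absurd hz (ιA_ne_lastU b')
      · exact absurd hz (ιA_ne_qp b')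
  · intro hy
    exact Or.inl ⟨hy, hz⟩

lemma restrictA_mem {l k : ℕ} {g : Fin (k + 1) → Γ} {x : Fin (l + 1) → Γ}
    {P : Setoid (Fin (l + 1) ⊕ Fin (k + 1))}
    (hP : P ∈ NCprime x g) (hU : hasUp P) (hM : ¬ moreLow P) :
    Setoid.comap (ιA l k) P ∈ NCprime (fun i => x i.castSucc) (fun j => g j.castSucc) := by
  have hlq : P.r (Sum.inl (Fin.last l)) (qp (l + 1) k) := by
    obtain ⟨i, hi⟩ := hU
    have := upQ hP hi
    rwa [this] at hi
  have blockA : ∀ y, P.r y (qp (l + 1) k) →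
      (y = Sum.inl (Fin.last l) ∨ y = qp (l + 1) k) := by
    intro y hy
    rcases y with i | j
    · exact Or.inl (by rw [upQ hP hy])
    · rcases Fin.eq_castSucc_or_eq_last j with ⟨j', rfl⟩ | rfl
      · exact absurd ⟨j', hy⟩ hM
      · exact Or.inr rfl
  rw [mem_NCprime] at hP ⊢
  refine ⟨nonCrossing_comap _ (fun a b => (ιA_mono_iff a b).mpr) hP.1, fun p' => ?_⟩
  obtain ⟨hprod, hcard, hne⟩ := hP.2 (ιA l k p')
  have hql : ¬ P.r (Sum.inr (Fin.last k)) (ιA l k p') := by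
    intro hc
    rcases blockA _ (P.symm hc) with hh | hh
    · exact ιA_ne_lastU p' hh
    · exact ιA_ne_qp p' hh
  have hll : ¬ P.r (Sum.inl (Fin.last l)) (ιA l k p') := by
    intro hc
    rcases blockA _ (P.trans (P.symm hc) hlq) with hh | hh
    · exact ιA_ne_lastU p' hh
    · exact ιA_ne_qp p' hh
  have hUeq : upSet P (ιA l k p') =
      (upSet (Setoid.comap (ιA l k) P) p').map Fin.castSuccOrderEmb.toEmbedding := by
    rw [upSet_eq_map hll, upSet_comap_ιA]
  have hLeq : lowSet P (ιA l k p') =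
      (lowSet (Setoid.comap (ιA l k) P) p').map Fin.castSuccOrderEmb.toEmbedding := by
    rw [lowSet_eq_map hql, lowSet_comap_ιA]
  refine ⟨?_, ?_, ?_⟩
  · rw [hUeq, hLeq, orderedProd_map_castSucc, orderedProd_map_castSucc] at hprod
    exact hprod
  · rw [hUeq, Finset.card_map] at hcard
    exact hcard
  · rw [hLeq] at hne
    exact Finset.map_nonempty.mp hne

lemma extA_mem {l k : ℕ} {g : Fin (k + 1) → Γ} {x : Fin (l + 1) → Γ}
    {P' : Setoid (Fin l ⊕ Fin k)}
    (hP' : P' ∈ NCprime (fun i => x i.castSucc) (fun j => g j.castSucc))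
    (hxg : x (Fin.last l) = g (Fin.last k)) :
    extA P' ∈ NCprime x g ∧ hasUp (extA P') ∧ ¬ moreLow (extA P') := by
  rw [mem_NCprime] at hP'
  have pairs : ∀ p, (p = Sum.inl (Fin.last l) ∨ p = qp (l + 1) k) →
      (upSet (extA P') p = {Fin.last l} ∧ lowSet (extA P') p = {Fin.last k}) := by
    intro p hp
    constructor
    · ext i
      rw [mem_upSet, Finset.mem_singleton, extA_rel_pair P' _ hp]
      constructor
      · rintro (hh | hh)
        · exact Sum.inl.inj hh
        · exact absurd hh (by simp [qp])
      · rintro rfl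
        exact Or.inl rfl
    · ext j
      rw [mem_lowSet, Finset.mem_singleton, extA_rel_pair P' _ hp]
      constructor
      · rintro (hh | hh)
        · exact absurd hh (by simp [qp])
        · rw [show qp (l + 1) k = Sum.inr (Fin.last k) from rfl] at hh
          exact Sum.inr.inj hh
      · rintro rfl
        exact Or.inr rfl
  refine ⟨mem_NCprime.mpr ⟨?_, ?_⟩, ⟨Fin.last l, Or.inl ⟨Or.inl rfl, Or.inr rfl⟩⟩, ?_⟩
  · -- noncrossing
    rintro ⟨a, b, c, d, h1, h2, h3, hac, hbd, hab⟩
    have key : ∀ y z, (extA P').r y z →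
        ((y = Sum.inl (Fin.last l) ∨ y = qp (l + 1) k) ↔
         (z = Sum.inl (Fin.last l) ∨ z = qp (l + 1) k)) := by
      intro y z hyz
      constructor
      · intro hy
        exact ((extA_rel_pair P' z hy).mp ((extA P').symm hyz))
      · intro hz
        exact ((extA_rel_pair P' y hz).mp hyz)
    have hbet : ∀ u v w, ncPos (l + 1) (k + 1) u < ncPos (l + 1) (k + 1) v →
        ncPos (l + 1) (k + 1) v < ncPos (l + 1) (k + 1) w →
        (u = Sum.inl (Fin.last l) ∨ u = qp (l + 1) k) →
        (w = Sum.inl (Fin.last l) ∨ w = qp (l + 1) k) → False := by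
      rintro u v w hu hv (rfl | rfl) (rfl | rfl)
      · rw [posA_lastU] at hu hv
        omega
      · rw [posA_lastU] at hu
        rw [posA_qp] at hv
        exact posA_not_between v ⟨hu, hv⟩
      · rw [posA_qp] at hu
        rw [posA_lastU] at hv
        omega
      · rw [posA_qp] at hu hv
        omega
    by_cases hap : a = Sum.inl (Fin.last l) ∨ a = qp (l + 1) k
    · exact hbet a b c h1 h2 hap ((key a c hac).mp hap)
    · by_cases hbp : b = Sum.inl (Fin.last l) ∨ b = qp (l + 1) k
      · exact hbet b c d h2 h3 hbp ((key b d hbd).mp hbp)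
      · have hcp : ¬ (c = Sum.inl (Fin.last l) ∨ c = qp (l + 1) k) :=
          fun hh => hap ((key a c hac).mpr hh)
        have hdp : ¬ (d = Sum.inl (Fin.last l) ∨ d = qp (l + 1) k) :=
          fun hh => hbp ((key b d hbd).mpr hh)
        obtain ⟨a', rfl⟩ := ((surj_ιA a).resolve_left (fun hh => hap (Or.inl hh))).resolve_left
          (fun hh => hap (Or.inr hh))
        obtain ⟨b', rfl⟩ := ((surj_ιA b).resolve_left (fun hh => hbp (Or.inl hh))).resolve_left
          (fun hh => hbp (Or.inr hh))
        obtain ⟨c', rfl⟩ := ((surj_ιA c).resolve_left (fun hh => hcp (Or.inl hh))).resolve_left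
          (fun hh => hcp (Or.inr hh))
        obtain ⟨d', rfl⟩ := ((surj_ιA d).resolve_left (fun hh => hdp (Or.inl hh))).resolve_left
          (fun hh => hdp (Or.inr hh))
        exact hP'.1 ⟨a', b', c', d', (ιA_mono_iff _ _).mp h1, (ιA_mono_iff _ _).mp h2,
          (ιA_mono_iff _ _).mp h3, (extA_rel_iff P' _ _).mp hac,
          (extA_rel_iff P' _ _).mp hbd, fun hh => hab ((extA_rel_iff P' _ _).mpr hh)⟩
  · -- conditions
    intro p
    rcases surj_ιA p with rfl | rfl | ⟨p', rfl⟩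
    · obtain ⟨hu, hl⟩ := pairs _ (Or.inl rfl)
      rw [hu, hl, orderedProd_singleton, orderedProd_singleton]
      exact ⟨hxg, by simp, ⟨Fin.last k, Finset.mem_singleton_self _⟩⟩
    · obtain ⟨hu, hl⟩ := pairs _ (Or.inr rfl)
      rw [hu, hl, orderedProd_singleton, orderedProd_singleton]
      exact ⟨hxg, by simp, ⟨Fin.last k, Finset.mem_singleton_self _⟩⟩
    · have hll : ¬ (extA P').r (Sum.inl (Fin.last l)) (ιA l k p') := by
        intro hc
        rcases (extA_rel_pair P' _ (Or.inl rfl)).mp ((extA P').symm hc) with hh | hh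
        · exact ιA_ne_lastU p' hh
        · exact ιA_ne_qp p' hh
      have hql : ¬ (extA P').r (Sum.inr (Fin.last k)) (ιA l k p') := by
        intro hc
        rcases (extA_rel_pair P' _ (Or.inr rfl)).mp ((extA P').symm hc) with hh | hh
        · exact ιA_ne_lastU p' hh
        · exact ιA_ne_qp p' hh
      have hUeq : upSet (extA P') (ιA l k p') =
          (upSet P' p').map Fin.castSuccOrderEmb.toEmbedding := by
        rw [upSet_eq_map hll]
        congr 1
        ext i
        rw [Finset.mem_filter, mem_upSet]
        exact ⟨fun hh => (extA_rel_iff P' (Sum.inl i) p').mp hh.2,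
          fun hh => ⟨Finset.mem_univ _, (extA_rel_iff P' (Sum.inl i) p').mpr hh⟩⟩
      have hLeq : lowSet (extA P') (ιA l k p') =
          (lowSet P' p').map Fin.castSuccOrderEmb.toEmbedding := by
        rw [lowSet_eq_map hql]
        congr 1
        ext j
        rw [Finset.mem_filter, mem_lowSet]
        exact ⟨fun hh => (extA_rel_iff P' (Sum.inr j) p').mp hh.2,
          fun hh => ⟨Finset.mem_univ _, (extA_rel_iff P' (Sum.inr j) p').mpr hh⟩⟩
      obtain ⟨hprod, hcard, hne⟩ := hP'.2 p'
      refine ⟨?_, ?_, ?_⟩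
      · rw [hUeq, hLeq, orderedProd_map_castSucc, orderedProd_map_castSucc]
        exact hprod
      · rw [hUeq, Finset.card_map]
        exact hcard
      · rw [hLeq]
        exact Finset.map_nonempty.mpr hne
  · -- ¬ moreLow
    rintro ⟨j, hj⟩
    rcases (extA_rel_pair P' _ (Or.inr rfl)).mp hj with hh | hh
    · exact absurd hh (by simp)
    · rw [qp, Sum.inr.injEq] at hh
      exact (Fin.castSucc_lt_last j).ne hh

lemma extA_restrictA {l k : ℕ} {g : Fin (k + 1) → Γ} {x : Fin (l + 1) → Γ}
    {P : Setoid (Fin (l + 1) ⊕ Fin (k + 1))}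
    (hP : P ∈ NCprime x g) (hU : hasUp P) (hM : ¬ moreLow P) :
    extA (Setoid.comap (ιA l k) P) = P := by
  have hlq : P.r (Sum.inl (Fin.last l)) (qp (l + 1) k) := by
    obtain ⟨i, hi⟩ := hU
    have := upQ hP hi
    rwa [this] at hi
  have blockA : ∀ y, P.r y (qp (l + 1) k) →
      (y = Sum.inl (Fin.last l) ∨ y = qp (l + 1) k) := by
    intro y hy
    rcases y with i | j
    · exact Or.inl (by rw [upQ hP hy])
    · rcases Fin.eq_castSucc_or_eq_last j with ⟨j', rfl⟩ | rfl
      · exact absurd ⟨j', hy⟩ hM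
      · exact Or.inr rfl
  have pairRel : ∀ y z, (y = Sum.inl (Fin.last l) ∨ y = qp (l + 1) k) →
      (z = Sum.inl (Fin.last l) ∨ z = qp (l + 1) k) → P.r y z := by
    rintro y z (rfl | rfl) (rfl | rfl)
    · exact P.refl _
    · exact hlq
    · exact P.symm hlq
    · exact P.refl _
  apply Setoid.ext
  intro a b
  constructor
  · rintro (⟨h1, h2⟩ | ⟨a', b', h, rfl, rfl⟩)
    · exact pairRel a b h1 h2
    · exact h
  · intro h
    by_cases hap : a = Sum.inl (Fin.last l) ∨ a = qp (l + 1) k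
    · have haq : P.r a (qp (l + 1) k) := pairRel _ _ hap (Or.inr rfl)
      have hbq : P.r b (qp (l + 1) k) := P.trans (P.symm h) haq
      exact Or.inl ⟨hap, blockA b hbq⟩
    · by_cases hbp : b = Sum.inl (Fin.last l) ∨ b = qp (l + 1) k
      · have hbq : P.r b (qp (l + 1) k) := pairRel _ _ hbp (Or.inr rfl)
        exact absurd (blockA a (P.trans h hbq)) hap
      · obtain ⟨a', rfl⟩ := ((surj_ιA a).resolve_left (fun hh => hap (Or.inl hh))).resolve_left
          (fun hh => hap (Or.inr hh))
        obtain ⟨b', rfl⟩ := ((surj_ιA b).resolve_left (fun hh => hbp (Or.inl hh))).resolve_left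
          (fun hh => hbp (Or.inr hh))
        exact Or.inr ⟨a', b', h, rfl, rfl⟩

lemma restrictA_extA {l k : ℕ} (P' : Setoid (Fin l ⊕ Fin k)) :
    Setoid.comap (ιA l k) (extA P') = P' := by
  apply Setoid.ext
  intro a b
  exact extA_rel_iff P' a b

lemma caseA {l k : ℕ} (g : Fin (k + 1) → Γ) (x : Fin (l + 1) → Γ) :
    Nat.card {P : Setoid (Fin (l + 1) ⊕ Fin (k + 1)) //
        (P ∈ NCprime x g ∧ hasUp P) ∧ ¬ moreLow P}
      = if x (Fin.last l) = g (Fin.last k) then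
          Nat.card {P' : Setoid (Fin l ⊕ Fin k) //
            P' ∈ NCprime (fun i => x i.castSucc) (fun j => g j.castSucc)}
        else 0 := by
  by_cases hxg : x (Fin.last l) = g (Fin.last k)
  · rw [if_pos hxg]
    apply Nat.card_congr
    refine ⟨fun P => ⟨Setoid.comap (ιA l k) P.val, restrictA_mem P.2.1.1 P.2.1.2 P.2.2⟩,
      fun P' => ⟨extA P'.val, by
        obtain ⟨h1, h2, h3⟩ := extA_mem P'.2 hxg
        exact ⟨⟨h1, h2⟩, h3⟩⟩,
      fun P => Subtype.ext (extA_restrictA P.2.1.1 P.2.1.2 P.2.2),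
      fun P' => Subtype.ext (restrictA_extA P'.val)⟩
  · rw [if_neg hxg]
    apply card_eq_zero_of_none
    rintro P ⟨⟨hP, hU⟩, hM⟩
    apply hxg
    have hlq : P.r (Sum.inl (Fin.last l)) (qp (l + 1) k) := by
      obtain ⟨i, hi⟩ := hU
      have := upQ hP hi
      rwa [this] at hi
    rw [mem_NCprime] at hP
    obtain ⟨hprod, hcard, -⟩ := hP.2 (qp (l + 1) k)
    have hu : upSet P (qp (l + 1) k) = {Fin.last l} := by
      have hmem : Fin.last l ∈ upSet P (qp (l + 1) k) := mem_upSet.mpr hlq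
      ext i
      rw [mem_upSet, Finset.mem_singleton]
      exact ⟨fun hi => two_mem_card_le_one hcard (mem_upSet.mpr hi) hmem,
        fun hh => hh ▸ hlq⟩
    have hl : lowSet P (qp (l + 1) k) = {Fin.last k} := by
      ext z
      rw [mem_lowSet, Finset.mem_singleton]
      constructor
      · intro hz
        rcases Fin.eq_castSucc_or_eq_last z with ⟨j', rfl⟩ | rfl
        · exact absurd ⟨j', hz⟩ hM
        · rfl
      · rintro rfl
        exact P.refl _
    rw [hu, hl, orderedProd_singleton, orderedProd_singleton] at hprod
    exact hprod

end CaseA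
section CaseB
variable {Γ : Type*} [Group Γ]

def πB (l k : ℕ) : Fin (l + 1) ⊕ Fin (k + 1) → Fin (l + 1) ⊕ Fin k :=
  Sum.elim (fun i => Sum.inl i)
    (fun j => Fin.lastCases (Sum.inl (Fin.last l)) (fun j' => Sum.inr j') j)

lemma πB_ι {l k : ℕ} (z : Fin (l + 1) ⊕ Fin k) : πB l k (ιk (l + 1) k z) = z := by
  rcases z with i | j
  · rfl
  · simp [πB, ιk]

lemma πB_qp {l k : ℕ} : πB l k (qp (l + 1) k) = Sum.inl (Fin.last l) := by
  simp [πB, qp]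

lemma πB_inl {l k : ℕ} (i : Fin (l + 1)) : πB l k (Sum.inl i) = Sum.inl i := rfl

lemma πB_inr_castSucc {l k : ℕ} (j : Fin k) : πB l k (Sum.inr j.castSucc) = Sum.inr j := by
  simp [πB]

lemma forwardB_mem {l k : ℕ} {g : Fin (k + 1) → Γ} {x : Fin (l + 1) → Γ}
    {P : Setoid (Fin (l + 1) ⊕ Fin (k + 1))}
    (hP : P ∈ NCprime x g) (hU : hasUp P) (hM : moreLow P) :
    Setoid.comap (ιk (l + 1) k) P ∈
      NCprime (Fin.snoc (fun i : Fin l => x i.castSucc)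
        (x (Fin.last l) * (g (Fin.last k))⁻¹)) (fun j => g j.castSucc) := by
  have hlq : P.r (Sum.inl (Fin.last l)) (qp (l + 1) k) := by
    obtain ⟨i, hi⟩ := hU
    have := upQ hP hi
    rwa [this] at hi
  have hPm := hP
  rw [mem_NCprime] at hPm ⊢
  refine ⟨nonCrossing_comap _ (fun a b => (ιk_mono_iff a b).mpr) hPm.1, fun p' => ?_⟩
  obtain ⟨hprod, hcard, hne⟩ := hPm.2 (ιk (l + 1) k p')
  by_cases hq : P.r (Sum.inr (Fin.last k)) (ιk (l + 1) k p')
  · -- the block of `p'` contains the last lower point, hence also the last upper point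
    have hUP : upSet P (ιk (l + 1) k p') = {Fin.last l} := by
      ext i
      rw [mem_upSet, Finset.mem_singleton]
      constructor
      · intro hi
        exact upQ hP (P.trans hi (P.symm hq))
      · rintro rfl
        exact P.trans hlq hq
    have hLP : lowSet P (ιk (l + 1) k p') = insert (Fin.last k)
        ((Finset.univ.filter fun j : Fin k =>
          P.r (Sum.inr j.castSucc) (ιk (l + 1) k p')).map Fin.castSuccOrderEmb.toEmbedding) :=
      lowSet_eq_insert_map hq
    rw [hUP, orderedProd_singleton, hLP, orderedProd_insert_last] at hprod
    refine ⟨?_, ?_, ?_⟩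
    · rw [upSet_comap_ιk, lowSet_comap_ιk, hUP, orderedProd_singleton, Fin.snoc_last,
        hprod, mul_inv_cancel_right]
    · rw [upSet_comap_ιk, hUP]
      simp
    · obtain ⟨j₀, hj₀⟩ := hM
      refine ⟨j₀, ?_⟩
      rw [lowSet_comap_ιk, Finset.mem_filter]
      exact ⟨Finset.mem_univ _, P.trans hj₀ hq⟩
  · -- the block of `p'` avoids the last lower point
    have hlastnot : ¬ P.r (Sum.inl (Fin.last l)) (ιk (l + 1) k p') := by
      intro hc
      exact hq (P.trans (P.symm hlq) hc)
    have hUP : upSet P (ιk (l + 1) k p') = (Finset.univ.filter fun i : Fin l =>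
        P.r (Sum.inl i.castSucc) (ιk (l + 1) k p')).map Fin.castSuccOrderEmb.toEmbedding :=
      upSet_eq_map hlastnot
    have hLP : lowSet P (ιk (l + 1) k p') = (Finset.univ.filter fun j : Fin k =>
        P.r (Sum.inr j.castSucc) (ιk (l + 1) k p')).map Fin.castSuccOrderEmb.toEmbedding :=
      lowSet_eq_map hq
    rw [hUP, orderedProd_map_castSucc, hLP, orderedProd_map_castSucc] at hprod
    refine ⟨?_, ?_, ?_⟩
    · rw [upSet_comap_ιk, lowSet_comap_ιk, hUP, orderedProd_map_castSucc,
        orderedProd_congr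
          (fun i => Fin.snoc (α := fun _ => Γ) (fun i : Fin l => x i.castSucc)
            (x (Fin.last l) * (g (Fin.last k))⁻¹) i.castSucc)
          (fun i : Fin l => x i.castSucc) _
          (fun i _ => Fin.snoc_castSucc (α := fun _ => Γ)
            (x (Fin.last l) * (g (Fin.last k))⁻¹) (fun i : Fin l => x i.castSucc) i)]
      exact hprod
    · rw [upSet_comap_ιk]
      exact hcard
    · rw [hLP] at hne
      rw [lowSet_comap_ιk]
      exact Finset.map_nonempty.mp hne

lemma relq' {l k : ℕ} (P' : Setoid (Fin (l + 1) ⊕ Fin k)) (p : Fin (l + 1) ⊕ Fin (k + 1)) :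
    (Setoid.comap (πB l k) P').r (Sum.inr (Fin.last k)) p ↔
      P'.r (Sum.inl (Fin.last l)) (πB l k p) := by
  rw [comap_r, show πB l k (Sum.inr (Fin.last k)) = Sum.inl (Fin.last l) from πB_qp]

lemma relc' {l k : ℕ} (P' : Setoid (Fin (l + 1) ⊕ Fin k)) (j : Fin k)
    (p : Fin (l + 1) ⊕ Fin (k + 1)) :
    (Setoid.comap (πB l k) P').r (Sum.inr j.castSucc) p ↔ P'.r (Sum.inr j) (πB l k p) := by
  rw [comap_r, πB_inr_castSucc]

lemma relι' {l k : ℕ} (P' : Setoid (Fin (l + 1) ⊕ Fin k)) (z w : Fin (l + 1) ⊕ Fin k) :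
    (Setoid.comap (πB l k) P').r (ιk (l + 1) k z) (ιk (l + 1) k w) ↔ P'.r z w := by
  rw [comap_r, πB_ι, πB_ι]

lemma relmq {l k : ℕ} (P' : Setoid (Fin (l + 1) ⊕ Fin k)) :
    (Setoid.comap (πB l k) P').r (qp (l + 1) k) (Sum.inl (Fin.last l)) := by
  rw [comap_r, πB_qp, πB_inl]

lemma backwardB_mem {l k : ℕ} {g : Fin (k + 1) → Γ} {x : Fin (l + 1) → Γ}
    {P' : Setoid (Fin (l + 1) ⊕ Fin k)}
    (hP' : P' ∈ NCprime (Fin.snoc (fun i : Fin l => x i.castSucc)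
      (x (Fin.last l) * (g (Fin.last k))⁻¹)) (fun j => g j.castSucc)) :
    Setoid.comap (πB l k) P' ∈ NCprime x g ∧ hasUp (Setoid.comap (πB l k) P') ∧
      moreLow (Setoid.comap (πB l k) P') := by
  set R := Setoid.comap (πB l k) P' with hR
  rw [mem_NCprime] at hP'
  have upR : ∀ (i : Fin (l + 1)) p, R.r (Sum.inl i) p ↔ P'.r (Sum.inl i) (πB l k p) :=
    fun i p => Iff.rfl
  refine ⟨mem_NCprime.mpr ⟨?_, ?_⟩, ?_, ?_⟩
  · -- non-crossing via the adjacency argument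
    rintro ⟨a, b, c, d, h1, h2, h3, hac, hbd, hab⟩
    have pull : ∀ u1 u2 u3 u4 : Fin (l + 1) ⊕ Fin (k + 1),
        u1 ≠ qp (l + 1) k → u2 ≠ qp (l + 1) k → u3 ≠ qp (l + 1) k → u4 ≠ qp (l + 1) k →
        ncPos (l + 1) (k + 1) u1 < ncPos (l + 1) (k + 1) u2 →
        ncPos (l + 1) (k + 1) u2 < ncPos (l + 1) (k + 1) u3 →
        ncPos (l + 1) (k + 1) u3 < ncPos (l + 1) (k + 1) u4 →
        R.r u1 u3 → R.r u2 u4 → ¬ R.r u1 u2 → False := by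
      intro u1 u2 u3 u4 n1 n2 n3 n4 p1 p2 p3 r13 r24 r12
      obtain ⟨z1, rfl⟩ := (surj_ιk u1).resolve_left n1
      obtain ⟨z2, rfl⟩ := (surj_ιk u2).resolve_left n2
      obtain ⟨z3, rfl⟩ := (surj_ιk u3).resolve_left n3
      obtain ⟨z4, rfl⟩ := (surj_ιk u4).resolve_left n4
      exact hP'.1 ⟨z1, z2, z3, z4, (ιk_mono_iff _ _).mp p1, (ιk_mono_iff _ _).mp p2,
        (ιk_mono_iff _ _).mp p3, (relι' P' _ _).mp r13, (relι' P' _ _).mp r24,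
        fun hh => r12 ((relι' P' _ _).mpr hh)⟩
    have rqm : R.r (qp (l + 1) k) (Sum.inl (Fin.last l)) := relmq P'
    have posinj := ncPos_injective (l + 1) (k + 1)
    by_cases ha : a = qp (l + 1) k
    · subst ha
      have hbq : b ≠ qp (l + 1) k := fun hh => lt_irrefl _ (hh ▸ h1)
      have hcq : c ≠ qp (l + 1) k := fun hh => lt_irrefl _ ((hh ▸ (h1.trans h2)))
      have hdq : d ≠ qp (l + 1) k := fun hh => lt_irrefl _ ((hh ▸ (h1.trans (h2.trans h3))))
      have hmq : (Sum.inl (Fin.last l) : Fin (l + 1) ⊕ Fin (k + 1)) ≠ qp (l + 1) k := by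
        simp [qp]
      refine pull (Sum.inl (Fin.last l)) b c d hmq hbq hcq hdq ?_ h2 h3
        (R.trans (R.symm rqm) hac) hbd
        (fun hh => hab (R.trans rqm hh))
      rw [posA_lastU]
      rw [posA_qp] at h1
      omega
    · by_cases hb : b = qp (l + 1) k
      · subst hb
        have hcq : c ≠ qp (l + 1) k := fun hh => lt_irrefl _ (hh ▸ h2)
        have hdq : d ≠ qp (l + 1) k := fun hh => lt_irrefl _ ((hh ▸ (h2.trans h3)))
        have ham : a ≠ Sum.inl (Fin.last l) := by
          rintro rfl
          exact hab (R.symm rqm)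
        have hmq : (Sum.inl (Fin.last l) : Fin (l + 1) ⊕ Fin (k + 1)) ≠ qp (l + 1) k := by
          simp [qp]
        have hpa : ncPos (l + 1) (k + 1) a < l := by
          have h1' := h1
          rw [posA_qp] at h1'
          have hne : ncPos (l + 1) (k + 1) a ≠ l := by
            intro hh
            exact ham (posinj (hh.trans posA_lastU.symm))
          omega
        refine pull a (Sum.inl (Fin.last l)) c d ha hmq hcq hdq ?_ ?_ h3
          hac (R.trans (R.symm rqm) hbd)
          (fun hh => hab (R.trans hh (R.symm rqm)))
        · rw [posA_lastU]
          exact hpa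
        · rw [posA_lastU]
          have h2' := h2
          rw [posA_qp] at h2'
          omega
      · by_cases hc : c = qp (l + 1) k
        · subst hc
          have hdq : d ≠ qp (l + 1) k := fun hh => lt_irrefl _ (hh ▸ h3)
          have hbm : b ≠ Sum.inl (Fin.last l) := by
            rintro rfl
            exact hab (R.trans hac rqm)
          have hmq : (Sum.inl (Fin.last l) : Fin (l + 1) ⊕ Fin (k + 1)) ≠ qp (l + 1) k := by
            simp [qp]
          have hpb : ncPos (l + 1) (k + 1) b < l := by
            have h2' := h2
            rw [posA_qp] at h2'
            have hne : ncPos (l + 1) (k + 1) b ≠ l := by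
              intro hh
              exact hbm (posinj (hh.trans posA_lastU.symm))
            omega
          refine pull a b (Sum.inl (Fin.last l)) d ha hb hmq hdq h1 ?_ ?_
            (R.trans hac rqm) hbd hab
          · rw [posA_lastU]
            exact hpb
          · rw [posA_lastU]
            have h3' := h3
            rw [posA_qp] at h3'
            omega
        · by_cases hd : d = qp (l + 1) k
          · subst hd
            have hcm : c ≠ Sum.inl (Fin.last l) := by
              rintro rfl
              exact hab (R.trans (R.trans hac (R.symm rqm)) (R.symm hbd))
            have hmq : (Sum.inl (Fin.last l) : Fin (l + 1) ⊕ Fin (k + 1)) ≠ qp (l + 1) k := by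
              simp [qp]
            have hpc : ncPos (l + 1) (k + 1) c < l := by
              have h3' := h3
              rw [posA_qp] at h3'
              have hne : ncPos (l + 1) (k + 1) c ≠ l := by
                intro hh
                exact hcm (posinj (hh.trans posA_lastU.symm))
              omega
            refine pull a b c (Sum.inl (Fin.last l)) ha hb hc hmq h1 h2 ?_
              hac (R.trans hbd rqm) hab
            rw [posA_lastU]
            exact hpc
          · exact pull a b c d ha hb hc hd h1 h2 h3 hac hbd hab
  · -- conditions
    intro p
    have hUeq : upSet R p = upSet P' (πB l k p) := rfl
    have hinner : ∀ p, (Finset.univ.filter fun j : Fin k => R.r (Sum.inr j.castSucc) p)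
        = lowSet P' (πB l k p) := by
      intro p
      ext j
      rw [Finset.mem_filter, mem_lowSet]
      exact ⟨fun hh => (relc' P' j p).mp hh.2,
        fun hh => ⟨Finset.mem_univ _, (relc' P' j p).mpr hh⟩⟩
    obtain ⟨hprod, hcard, hne⟩ := hP'.2 (πB l k p)
    by_cases hm : P'.r (Sum.inl (Fin.last l)) (πB l k p)
    · have hUP' : upSet P' (πB l k p) = {Fin.last l} := by
        have hmem : Fin.last l ∈ upSet P' (πB l k p) := mem_upSet.mpr hm
        ext i
        rw [mem_upSet, Finset.mem_singleton]
        exact ⟨fun hi => two_mem_card_le_one hcard (mem_upSet.mpr hi) hmem,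
          fun hh => hh ▸ hm⟩
      have hLR : lowSet R p = insert (Fin.last k)
          ((lowSet P' (πB l k p)).map Fin.castSuccOrderEmb.toEmbedding) := by
        rw [lowSet_eq_insert_map ((relq' P' p).mpr hm), hinner]
      rw [hUP', orderedProd_singleton, Fin.snoc_last] at hprod
      refine ⟨?_, ?_, ?_⟩
      · rw [hUeq, hUP', orderedProd_singleton, hLR, orderedProd_insert_last, ← hprod,
          inv_mul_cancel_right]
      · rw [hUeq, hUP']
        simp
      · refine ⟨Fin.last k, ?_⟩
        rw [hLR]
        exact Finset.mem_insert_self _ _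
    · have hUP' : upSet P' (πB l k p) =
          (Finset.univ.filter fun i : Fin l =>
            P'.r (Sum.inl i.castSucc) (πB l k p)).map Fin.castSuccOrderEmb.toEmbedding :=
        upSet_eq_map hm
      have hLR : lowSet R p =
          (lowSet P' (πB l k p)).map Fin.castSuccOrderEmb.toEmbedding := by
        rw [lowSet_eq_map (fun hh => hm ((relq' P' p).mp hh)), hinner]
      refine ⟨?_, ?_, ?_⟩
      · rw [hUeq, orderedProd_congr x
            (Fin.snoc (α := fun _ => Γ) (fun i : Fin l => x i.castSucc)
              (x (Fin.last l) * (g (Fin.last k))⁻¹)) _ ?hcongr,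
          hprod, hLR, orderedProd_map_castSucc]
        case hcongr =>
          intro i hi
          rcases Fin.eq_castSucc_or_eq_last i with ⟨i₀, rfl⟩ | rfl
          · rw [Fin.snoc_castSucc]
          · exact absurd (mem_upSet.mp hi) hm
      · rw [hUeq]
        exact hcard
      · rw [hLR]
        exact Finset.map_nonempty.mpr hne
  · exact ⟨Fin.last l, R.symm (relmq P')⟩
  · obtain ⟨j₀, hj₀⟩ := (hP'.2 (Sum.inl (Fin.last l))).2.2
    refine ⟨j₀, (relc' P' j₀ (qp (l + 1) k)).mpr ?_⟩
    rw [πB_qp]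
    exact mem_lowSet.mp hj₀

lemma comap_ιk_comap_πB {l k : ℕ} (P' : Setoid (Fin (l + 1) ⊕ Fin k)) :
    Setoid.comap (ιk (l + 1) k) (Setoid.comap (πB l k) P') = P' := by
  apply Setoid.ext
  intro a b
  rw [comap_r, comap_r, πB_ι, πB_ι]

lemma comap_πB_comap_ιk {l k : ℕ} {g : Fin (k + 1) → Γ} {x : Fin (l + 1) → Γ}
    {P : Setoid (Fin (l + 1) ⊕ Fin (k + 1))}
    (hP : P ∈ NCprime x g) (hU : hasUp P) :
    Setoid.comap (πB l k) (Setoid.comap (ιk (l + 1) k) P) = P := by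
  have hlq : P.r (Sum.inl (Fin.last l)) (qp (l + 1) k) := by
    obtain ⟨i, hi⟩ := hU
    have := upQ hP hi
    rwa [this] at hi
  have key : ∀ y, P.r y (ιk (l + 1) k (πB l k y)) := by
    intro y
    rcases surj_ιk y with rfl | ⟨z, rfl⟩
    · rw [πB_qp]
      exact P.symm hlq
    · rw [πB_ι]
  apply Setoid.ext
  intro a b
  constructor
  · intro h
    have h' : P.r (ιk (l + 1) k (πB l k a)) (ιk (l + 1) k (πB l k b)) := h
    exact P.trans (key a) (P.trans h' (P.symm (key b)))
  · intro h
    show P.r (ιk (l + 1) k (πB l k a)) (ιk (l + 1) k (πB l k b))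
    exact P.trans (P.symm (key a)) (P.trans h (key b))

lemma caseB {l k : ℕ} (g : Fin (k + 1) → Γ) (x : Fin (l + 1) → Γ) :
    Nat.card {P : Setoid (Fin (l + 1) ⊕ Fin (k + 1)) //
        (P ∈ NCprime x g ∧ hasUp P) ∧ moreLow P}
      = Nat.card {P' : Setoid (Fin (l + 1) ⊕ Fin k) //
          P' ∈ NCprime (Fin.snoc (fun i : Fin l => x i.castSucc)
            (x (Fin.last l) * (g (Fin.last k))⁻¹)) (fun j => g j.castSucc)} := by
  apply Nat.card_congr
  refine ⟨fun P => ⟨Setoid.comap (ιk (l + 1) k) P.val, forwardB_mem P.2.1.1 P.2.1.2 P.2.2⟩,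
    fun P' => ⟨Setoid.comap (πB l k) P'.val, by
      obtain ⟨h1, h2, h3⟩ := backwardB_mem P'.2
      exact ⟨⟨h1, h2⟩, h3⟩⟩,
    fun P => Subtype.ext ?_, fun P' => Subtype.ext (comap_ιk_comap_πB P'.val)⟩
  exact comap_πB_comap_ιk P.2.1.1 P.2.1.2

end CaseB
section Main
variable {Γ : Type*} [Group Γ]

lemma card_splitP {β : Type*} [Finite β] (s p : β → Prop) :
    Nat.card {a : β // s a} =
      Nat.card {a : β // s a ∧ p a} + Nat.card {a : β // s a ∧ ¬ p a} :=
  card_split {a | s a} p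

lemma card_split4 {β : Type*} [Finite β] (s p q : β → Prop) :
    Nat.card {a : β // s a} =
      Nat.card {a : β // (s a ∧ p a) ∧ q a} + Nat.card {a : β // (s a ∧ p a) ∧ ¬ q a}
      + (Nat.card {a : β // (s a ∧ ¬ p a) ∧ q a}
        + Nat.card {a : β // (s a ∧ ¬ p a) ∧ ¬ q a}) := by
  rw [card_splitP s p, card_splitP (fun a => s a ∧ p a) q,
    card_splitP (fun a => s a ∧ ¬ p a) q]

theorem key_induction : ∀ (k : ℕ) (g : Fin k → Γ) (l : ℕ) (x : Fin l → Γ),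
    (Pk g) (List.ofFn x) =
      (Nat.card {P : Setoid (Fin l ⊕ Fin k) // P ∈ NCprime x g} : ℤ) := by
  intro k
  induction k with
  | zero =>
    intro g l x
    rw [Pk_zero]
    cases l with
    | zero =>
      rw [List.ofFn_zero, Finsupp.single_eq_same]
      have hmem : (⟨fun _ _ => True,
          ⟨fun _ => trivial, fun _ => trivial, fun _ _ => trivial⟩⟩ :
            Setoid (Fin 0 ⊕ Fin 0)) ∈ NCprime x g := by
        rw [mem_NCprime]
        exact ⟨fun ⟨a, _⟩ => isEmptyElim a, fun p => isEmptyElim p⟩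
      haveI : Subsingleton (Setoid (Fin 0 ⊕ Fin 0)) :=
        ⟨fun P Q => Setoid.ext fun a _ => isEmptyElim a⟩
      haveI : Unique {P : Setoid (Fin 0 ⊕ Fin 0) // P ∈ NCprime x g} :=
        ⟨⟨⟨_, hmem⟩⟩, fun a => Subtype.ext (Subsingleton.elim _ _)⟩
      rw [Nat.card_unique]
      norm_num
    | succ l' =>
      have hne : ([] : List Γ) ≠ List.ofFn x := by
        intro h
        have := congrArg List.length h
        simp at this
      rw [Finsupp.single_eq_of_ne' hne]
      have hzero : Nat.card {P : Setoid (Fin (l' + 1) ⊕ Fin 0) // P ∈ NCprime x g} = 0 := by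
        apply card_eq_zero_of_none
        intro P hP
        obtain ⟨j, -⟩ := ((mem_NCprime.mp hP).2 (Sum.inl (0 : Fin (l' + 1)))).2.2
        exact isEmptyElim j
      rw [hzero]
      norm_num
  | succ k ih =>
    intro g l x
    rw [Pk_succ]
    cases l with
    | zero =>
      have hofn : List.ofFn x = [] := List.ofFn_zero
      rw [hofn, fmul_c_apply_nil]
      have hsnoc : [(g (Fin.last k))⁻¹] = List.ofFn (Fin.snoc x (g (Fin.last k))⁻¹) := by
        rw [ofFn_snoc', List.ofFn_zero, List.nil_append]
      have hemp : ([] : List Γ) = List.ofFn x := hofn.symm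
      rw [hsnoc, hemp]
      rw [ih (fun i => g i.castSucc) (0 + 1) (Fin.snoc x (g (Fin.last k))⁻¹),
        ih (fun i => g i.castSucc) 0 x]
      rw [card_split4 (fun P : Setoid (Fin 0 ⊕ Fin (k + 1)) => P ∈ NCprime x g)
        hasUp moreLow]
      have hA0 : Nat.card {P : Setoid (Fin 0 ⊕ Fin (k + 1)) //
          (P ∈ NCprime x g ∧ hasUp P) ∧ moreLow P} = 0 :=
        card_eq_zero_of_none _ (fun P hP => by
          obtain ⟨⟨-, i, -⟩, -⟩ := hP
          exact isEmptyElim i)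
      have hB0 : Nat.card {P : Setoid (Fin 0 ⊕ Fin (k + 1)) //
          (P ∈ NCprime x g ∧ hasUp P) ∧ ¬ moreLow P} = 0 :=
        card_eq_zero_of_none _ (fun P hP => by
          obtain ⟨⟨-, i, -⟩, -⟩ := hP
          exact isEmptyElim i)
      rw [hA0, hB0, caseC g x, caseD g x]
      push_cast
      by_cases hg : g (Fin.last k) = 1 <;> simp [hg] <;> ring
    | succ l' =>
      have hofn : List.ofFn x =
          List.ofFn (fun i : Fin l' => x i.castSucc) ++ [x (Fin.last l')] := by
        rw [List.ofFn_succ' x, List.concat_eq_append]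
      rw [hofn, fmul_c_apply_concat]
      have hC : (List.ofFn (fun i : Fin l' => x i.castSucc) ++ [x (Fin.last l')])
            ++ [(g (Fin.last k))⁻¹] = List.ofFn (Fin.snoc x (g (Fin.last k))⁻¹) := by
        rw [← hofn]
        exact (ofFn_snoc' _ _).symm
      have hB : List.ofFn (fun i : Fin l' => x i.castSucc)
            ++ [x (Fin.last l') * (g (Fin.last k))⁻¹]
          = List.ofFn (Fin.snoc (fun i : Fin l' => x i.castSucc)
              (x (Fin.last l') * (g (Fin.last k))⁻¹)) :=
        (ofFn_snoc' _ _).symm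
      have hD : List.ofFn (fun i : Fin l' => x i.castSucc) ++ [x (Fin.last l')]
          = List.ofFn x := hofn.symm
      rw [hC, hB, hD]
      rw [ih (fun i => g i.castSucc) l' (fun i => x i.castSucc),
        ih (fun i => g i.castSucc) (l' + 1)
          (Fin.snoc (fun i : Fin l' => x i.castSucc)
            (x (Fin.last l') * (g (Fin.last k))⁻¹)),
        ih (fun i => g i.castSucc) (l' + 1 + 1) (Fin.snoc x (g (Fin.last k))⁻¹),
        ih (fun i => g i.castSucc) (l' + 1) x]
      rw [card_split4 (fun P : Setoid (Fin (l' + 1) ⊕ Fin (k + 1)) => P ∈ NCprime x g)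
        hasUp moreLow]
      rw [caseB g x, caseA g x, caseC g x, caseD g x]
      push_cast
      by_cases hxg : x (Fin.last l') = g (Fin.last k) <;>
        by_cases hg : g (Fin.last k) = 1 <;> simp [hxg, hg] <;> ring

end Main

/-- Lemma 2.27: if `σ : D_σ → {1,…,l}` is a surjective non-decreasing map on a subset
`D_σ ⊆ {1,…,k}` and `x_j = Π_{σ(i)=j} g_i`, then the coefficient of `b_x` in
`P_k = (b_{g_1} + δ_{g_1,e}1) ⊗ ⋯ ⊗ (b_{g_k} + δ_{g_k,e}1)` equals the number of
non-crossing partitions in `NC'_Γ((x_1,…,x_l); (g_1,…,g_k))`. -/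
theorem coeff_Pk_eq_card_NCprime {Γ : Type*} [Group Γ] (k l : ℕ)
    (g : Fin k → Γ) (D : Finset (Fin k)) (σ : Fin k → Fin l)
    (hsurj : ∀ j : Fin l, ∃ i ∈ D, σ i = j)
    (hmono : ∀ i ∈ D, ∀ i' ∈ D, i ≤ i' → σ i ≤ σ i')
    (x : Fin l → Γ) (hx : ∀ j : Fin l, x j = orderedProd g (D.filter fun i => σ i = j)) :
    (Pk g) (List.ofFn x) =
      (Nat.card {P : Setoid (Fin l ⊕ Fin k) // P ∈ NCprime x g} : ℤ) := key_induction k g l x
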